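/- arXiv:0904.1686 — 5 statements merged into one kernel-verified Lean document; each statement's English description precedes it below -/
import Mathlib

section
/- Let A = {x ∈ ℝⁿ : ⟨x, η⟩ = κ} be a rational hyperplane with primitive integral normal η, and let u ∉ A and y ∈ A be rational points. Then the affine distance d_aff(u,y) (the ratio of the Euclidean distance |u−y| to the minimal Euclidean norm of a nonzero integral point on the line through 0 parallel to y−u) satisfies d_aff(u,y) ≤ |κ − ⟨u, η⟩|, with equality if and only if the primitive integral vector λ in the direction y−u satisfies |⟨λ, η⟩| = 1. -/
open Finset

/-- affine distance to a rational hyperplane is at most `|κ - ⟨u,η⟩|`,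
with equality iff the primitive integral direction is integrally transverse. -/
theorem affine_distance_le_ell {n : ℕ} (η l : Fin n → ℤ) (κ : ℝ)
    (hηprim : η ≠ 0 ∧ ∀ d : ℤ, (∀ i, d ∣ η i) → IsUnit d)
    (hlprim : l ≠ 0 ∧ ∀ d : ℤ, (∀ i, d ∣ l i) → IsUnit d)
    (u y : Fin n → ℝ)
    (hu_rat : ∀ i, ∃ q : ℚ, u i = (q : ℝ)) (hy_rat : ∀ i, ∃ q : ℚ, y i = (q : ℝ))
    (hyA : ∑ i, (η i : ℝ) * y i = κ)
    (huA : ∑ i, (η i : ℝ) * u i ≠ κ)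
    -- `l` is the primitive integral vector in the direction `y - u`
    (c : ℝ) (hc : 0 < c) (hdir : y - u = c • (fun i => (l i : ℝ)))
    -- `m` is the minimal Euclidean norm of a nonzero integral point on the
    -- line through `0` parallel to `y - u`
    (m : ℝ)
    (hm : IsLeast {r : ℝ | ∃ (a : Fin n → ℤ) (t : ℝ), a ≠ 0 ∧
        ((fun i => (a i : ℝ)) = t • (y - u)) ∧
        r = Real.sqrt (∑ i, (a i : ℝ) ^ 2)} m) :
    Real.sqrt (∑ i, (u i - y i) ^ 2) / m ≤ |κ - ∑ i, (η i : ℝ) * u i| ∧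
    (Real.sqrt (∑ i, (u i - y i) ^ 2) / m = |κ - ∑ i, (η i : ℝ) * u i| ↔
      |∑ i, l i * η i| = 1) := by
  obtain ⟨hl0, hlpr⟩ := hlprim
  set L : ℝ := Real.sqrt (∑ i, (l i : ℝ) ^ 2) with hLdef
  obtain ⟨i0, hi0'⟩ := Function.ne_iff.mp hl0
  have hi0 : l i0 ≠ 0 := by simpa using hi0'
  have hsumpos : 0 < ∑ i, (l i : ℝ) ^ 2 := by
    refine Finset.sum_pos' (fun i _ => sq_nonneg _) ⟨i0, Finset.mem_univ _, ?_⟩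
    have : ((l i0 : ℝ)) ≠ 0 := Int.cast_ne_zero.mpr hi0
    positivity
  have hLpos : 0 < L := Real.sqrt_pos.mpr hsumpos
  -- pointwise form of hdir
  have hyu : ∀ i, y i - u i = c * (l i : ℝ) := by
    intro i
    have := congrFun hdir i
    simpa using this
  -- m ≤ L
  have hmle : m ≤ L := by
    refine hm.2 ⟨l, c⁻¹, hl0, ?_, rfl⟩
    rw [hdir, smul_smul, inv_mul_cancel₀ hc.ne', one_smul]
  -- L ≤ m
  have hlem : L ≤ m := by
    obtain ⟨a, t, ha0, hat, hmval⟩ := hm.1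
    have hal : ∀ i, (a i : ℝ) = (t * c) * (l i : ℝ) := by
      intro i
      have := congrFun hat i
      simp only [hdir, smul_smul] at this
      simpa using this
    have hcross : ∀ i, l i0 * a i = a i0 * l i := by
      intro i
      have h : ((l i0 * a i : ℤ) : ℝ) = ((a i0 * l i : ℤ) : ℝ) := by
        push_cast
        rw [hal i, hal i0]; ring
      exact_mod_cast h
    have hgpos : 0 < Int.gcd (a i0) (l i0) := by
      rcases Int.gcd_pos_iff.mpr (Or.inr hi0) with h
      exact h
    obtain ⟨p, q, hpq, hpa, hql⟩ := Int.exists_gcd_one hgpos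
    have hg0 : (Int.gcd (a i0) (l i0) : ℤ) ≠ 0 := by exact_mod_cast hgpos.ne'
    have hq0 : q ≠ 0 := by
      intro h; exact hi0 (by rw [hql, h, zero_mul])
    have hqdvd : ∀ i, q ∣ l i := by
      intro i
      have h1 : q * (Int.gcd (a i0) (l i0) : ℤ) * a i = p * (Int.gcd (a i0) (l i0) : ℤ) * l i := by
        rw [← hql, ← hpa]; exact hcross i
      have h2 : q * a i = p * l i := by
        have := mul_left_cancel₀ hg0 (by ring_nf; ring_nf at h1; linarith [h1] : (Int.gcd (a i0) (l i0) : ℤ) * (q * a i) = (Int.gcd (a i0) (l i0) : ℤ) * (p * l i))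
        exact this
      have hcop : IsCoprime q p := by
        rw [Int.isCoprime_iff_gcd_eq_one, Int.gcd_comm]
        exact hpq
      exact hcop.dvd_of_dvd_mul_left ⟨a i, by linarith [h2]⟩
    have hqunit : q = 1 ∨ q = -1 := Int.isUnit_iff.mp (hlpr q hqdvd)
    -- a = k • l
    have hk : ∃ k : ℤ, ∀ i, a i = k * l i := by
      have h2 : ∀ i, q * a i = p * l i := by
        intro i
        have h1 : q * (Int.gcd (a i0) (l i0) : ℤ) * a i = p * (Int.gcd (a i0) (l i0) : ℤ) * l i := by
          rw [← hql, ← hpa]; exact hcross i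
        have : (Int.gcd (a i0) (l i0) : ℤ) * (q * a i) = (Int.gcd (a i0) (l i0) : ℤ) * (p * l i) := by
          ring_nf; ring_nf at h1; linarith
        exact mul_left_cancel₀ hg0 this
      rcases hqunit with h | h
      · exact ⟨p, fun i => by have := h2 i; rw [h, one_mul] at this; exact this⟩
      · exact ⟨-p, fun i => by have := h2 i; rw [h] at this; linarith⟩
    obtain ⟨k, hk⟩ := hk
    have hk0 : k ≠ 0 := by
      intro h
      apply ha0
      funext i
      simp [hk i, h]
    have hk1 : (1 : ℝ) ≤ (k : ℝ) ^ 2 := by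
      have : (1 : ℤ) ≤ k ^ 2 := by nlinarith [Int.one_le_abs hk0, abs_nonneg k, sq_abs k]
      exact_mod_cast this
    have hsumle : ∑ i, (l i : ℝ) ^ 2 ≤ ∑ i, (a i : ℝ) ^ 2 := by
      have : ∑ i, (a i : ℝ) ^ 2 = (k : ℝ) ^ 2 * ∑ i, (l i : ℝ) ^ 2 := by
        rw [Finset.mul_sum]
        refine Finset.sum_congr rfl fun i _ => ?_
        have : (a i : ℝ) = (k : ℝ) * (l i : ℝ) := by exact_mod_cast congrArg (fun z : ℤ => (z : ℝ)) (hk i)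
        rw [this]; ring
      rw [this]
      nlinarith [hsumpos]
    rw [hmval]
    exact Real.sqrt_le_sqrt hsumle
  have hmL : m = L := le_antisymm hmle hlem
  -- distance
  have hdist : Real.sqrt (∑ i, (u i - y i) ^ 2) = c * L := by
    have h1 : ∑ i, (u i - y i) ^ 2 = c ^ 2 * ∑ i, (l i : ℝ) ^ 2 := by
      rw [Finset.mul_sum]
      refine Finset.sum_congr rfl fun i _ => ?_
      rw [show u i - y i = -(c * (l i : ℝ)) by linarith [hyu i]]
      ring
    rw [h1, Real.sqrt_mul (sq_nonneg c), Real.sqrt_sq hc.le]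
  -- the pairing
  set Z : ℤ := ∑ i, l i * η i with hZdef
  have hκ : κ - ∑ i, (η i : ℝ) * u i = c * (Z : ℝ) := by
    rw [← hyA]
    rw [← Finset.sum_sub_distrib]
    have : ∀ i ∈ Finset.univ, (η i : ℝ) * y i - (η i : ℝ) * u i = c * ((l i * η i : ℤ) : ℝ) := by
      intro i _
      push_cast
      linear_combination (η i : ℝ) * hyu i
    rw [Finset.sum_congr rfl this, ← Finset.mul_sum, hZdef]
    push_cast
    ring
  have hZ0 : Z ≠ 0 := by
    intro h
    apply huA
    have : κ - ∑ i, (η i : ℝ) * u i = 0 := by rw [hκ, h]; simp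
    linarith
  have hZ1 : (1 : ℝ) ≤ |(Z : ℝ)| := by
    have : (1 : ℤ) ≤ |Z| := Int.one_le_abs hZ0
    calc (1 : ℝ) ≤ ((|Z| : ℤ) : ℝ) := by exact_mod_cast this
      _ = |(Z : ℝ)| := by push_cast; ring
  have hlhs : Real.sqrt (∑ i, (u i - y i) ^ 2) / m = c := by
    rw [hdist, hmL, mul_div_assoc, div_self hLpos.ne', mul_one]
  have hrhs : |κ - ∑ i, (η i : ℝ) * u i| = c * |(Z : ℝ)| := by
    rw [hκ, abs_mul, abs_of_pos hc]
  constructor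
  · rw [hlhs, hrhs]
    nlinarith
  · rw [hlhs, hrhs]
    constructor
    · intro h
      have habs : |(Z : ℝ)| = 1 := by
        have h' : c * 1 = c * |(Z : ℝ)| := by rw [mul_one]; exact h
        exact (mul_left_cancel₀ hc.ne' h').symm
      have : ((|Z| : ℤ) : ℝ) = 1 := by push_cast; exact habs
      exact_mod_cast this
    · intro h
      have : |(Z : ℝ)| = 1 := by
        have : ((|Z| : ℤ) : ℝ) = 1 := by exact_mod_cast h
        rw [← this]; push_cast; ring
      rw [this, mul_one]
end

section
/- Let Δ ⊂ ℝⁿ be a monotone polytope (interior lattice point 0) and suppose there is a vertex v such that every face of Δ containing v satisfies the star Ewald condition. Then 𝒮(Δ) contains a ℤ-basis of ℤⁿ (the weak Ewald condition). -/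
open Finset

/-- Dot product of an integral vector with a real vector. -/
def dotz {n : ℕ} (a : Fin n → ℤ) (x : Fin n → ℝ) : ℝ := ∑ i, (a i : ℝ) * x i

/-- `x` is a lattice point. -/
def IsLatticePt {n : ℕ} (x : Fin n → ℝ) : Prop := ∀ i, ∃ z : ℤ, x i = (z : ℝ)

/-- A nonzero integral vector is primitive. -/
def IsPrimitiveZ {n : ℕ} (a : Fin n → ℤ) : Prop :=
  a ≠ 0 ∧ ∀ d : ℤ, (∀ i, d ∣ a i) → IsUnit d

/-- A real vector that is a primitive integral vector. -/
def IsPrimIntVec {n : ℕ} (x : Fin n → ℝ) : Prop :=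
  ∃ a : Fin n → ℤ, IsPrimitiveZ a ∧ x = fun i => (a i : ℝ)

/-- `v` is a vertex (extreme point) of `Δ`. -/
def IsVertex {n : ℕ} (Δ : Set (Fin n → ℝ)) (v : Fin n → ℝ) : Prop :=
  v ∈ Δ ∧ IsExtreme ℝ Δ {v}

/-- `e` points from the vertex `v` along an edge (one-dimensional face) of `Δ`. -/
def IsEdgeDir {n : ℕ} (Δ : Set (Fin n → ℝ)) (v e : Fin n → ℝ) : Prop :=
  ∃ t : ℝ, 0 < t ∧ IsExtreme ℝ Δ (segment ℝ v (v + t • e))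

/-- The vertex-Fano condition at `v`, together with smoothness: the primitive integral
edge vectors `e i` at the vertex `v` form a `ℤ`-basis and satisfy `v + ∑ e i = u₀`. -/
def VertexFanoSmoothAt {n : ℕ} (Δ : Set (Fin n → ℝ)) (u₀ v : Fin n → ℝ) : Prop :=
  ∃ e : Fin n → (Fin n → ℝ), Function.Injective e ∧
    (∀ i, IsPrimIntVec (e i) ∧ IsEdgeDir Δ v (e i)) ∧
    (∀ z : Fin n → ℤ, ∃ c : Fin n → ℤ, (fun j => (z j : ℝ)) = ∑ i, (c i : ℝ) • e i) ∧
    v + ∑ i, e i = u₀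

/-- The set of indices of facets containing the face `⋂ i ∈ I, F i`. -/
def StarIdx {n N : ℕ} (F : Fin N → Set (Fin n → ℝ)) (I : Set (Fin N)) : Set (Fin N) :=
  {i | (⋂ i' ∈ I, F i') ⊆ F i}

/-- `Star(f)`: the union of the facets containing the face `f = ⋂ i ∈ I, F i`. -/
def StarU {n N : ℕ} (F : Fin N → Set (Fin n → ℝ)) (I : Set (Fin N)) : Set (Fin n → ℝ) :=
  ⋃ i ∈ StarIdx F I, F i

/-- `star(f)`: the union of the codimension-2 faces `Fᵢ ∩ Fⱼ`, `i ≠ j`, containing `f`. -/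
def starLowerU {n N : ℕ} (F : Fin N → Set (Fin n → ℝ)) (I : Set (Fin N)) : Set (Fin n → ℝ) :=
  ⋃ i ∈ StarIdx F I, ⋃ j ∈ StarIdx F I, ⋃ (_ : i ≠ j), F i ∩ F j

/-- The star Ewald condition for the face `⋂ i ∈ I, F i` of `Δ`. -/
def StarEwald {n N : ℕ} (Δ : Set (Fin n → ℝ)) (F : Fin N → Set (Fin n → ℝ))
    (I : Set (Fin N)) : Prop :=
  ∃ l : Fin n → ℤ, l ≠ 0 ∧ (fun j => (l j : ℝ)) ∈ Δ ∧ (fun j => -(l j : ℝ)) ∈ Δ ∧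
    (fun j => (l j : ℝ)) ∈ StarU F I \ starLowerU F I ∧
    (fun j => -(l j : ℝ)) ∉ StarU F I

/-! ### Auxiliary material -/

/-- Integer dot product. -/
def dzv {n : ℕ} (u l : Fin n → ℤ) : ℤ := ∑ k, u k * l k

lemma dotz_cast {n : ℕ} (u l : Fin n → ℤ) :
    dotz u (fun k => (l k : ℝ)) = (dzv u l : ℝ) := by
  simp [dotz, dzv]

lemma dotz_neg_cast {n : ℕ} (u l : Fin n → ℤ) :
    dotz u (fun k => -(l k : ℝ)) = -(dzv u l : ℝ) := by
  simp [dotz, dzv, mul_neg, Finset.sum_neg_distrib]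

lemma dotz_add {n : ℕ} (u : Fin n → ℤ) (x y : Fin n → ℝ) :
    dotz u (x + y) = dotz u x + dotz u y := by
  simp [dotz, mul_add, Finset.sum_add_distrib]

lemma dotz_smul {n : ℕ} (u : Fin n → ℤ) (t : ℝ) (x : Fin n → ℝ) :
    dotz u (t • x) = t * dotz u x := by
  simp only [dotz, Pi.smul_apply, smul_eq_mul, Finset.mul_sum]
  exact Finset.sum_congr rfl fun k _ => by ring

lemma dotz_sum {n m : ℕ} (u : Fin n → ℤ) (f : Fin m → Fin n → ℝ) :
    dotz u (∑ j, f j) = ∑ j, dotz u (f j) := by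
  simp only [dotz, Finset.sum_apply, Finset.mul_sum]
  exact Finset.sum_comm

lemma dotz_zero {n : ℕ} (u : Fin n → ℤ) : dotz u (0 : Fin n → ℝ) = 0 := by
  simp [dotz]

/-- if a monotone polytope has a vertex all of whose faces satisfy the
star Ewald condition, then `𝒮(Δ)` contains a `ℤ`-basis (the weak Ewald condition). -/
theorem star_ewald_at_vertex_implies_weak_ewald {n N : ℕ}
    (η : Fin N → Fin n → ℤ) (hprim : ∀ i, IsPrimitiveZ (η i))
    (Δ : Set (Fin n → ℝ)) (hΔ : Δ = {x | ∀ i, dotz (η i) x ≤ 1})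
    (hcpt : IsCompact Δ) (h0 : (0 : Fin n → ℝ) ∈ interior Δ)
    (huniq : ∀ w, IsLatticePt w → w ∈ interior Δ → w = 0)
    (hvlat : ∀ v, IsVertex Δ v → IsLatticePt v)
    (hfano : ∀ v, IsVertex Δ v → VertexFanoSmoothAt Δ 0 v)
    (F : Fin N → Set (Fin n → ℝ)) (hF : ∀ i, F i = {x ∈ Δ | dotz (η i) x = 1})
    (v : Fin n → ℝ) (hv : IsVertex Δ v)
    -- every face of `Δ` containing the vertex `v` satisfies the star Ewald condition
    (hstarE : ∀ I : Set (Fin N), I.Nonempty → (∀ i ∈ I, v ∈ F i) → StarEwald Δ F I) :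
    ∃ b : Fin n → (Fin n → ℤ),
      (∀ i, b i ≠ 0 ∧ (fun j => (b i j : ℝ)) ∈ Δ ∧ (fun j => -(b i j : ℝ)) ∈ Δ) ∧
      (∀ z : Fin n → ℤ, ∃ c : Fin n → ℤ, ∀ j, z j = ∑ i, c i * b i j) := by
  classical
  rcases Nat.eq_zero_or_pos n with hn | hn
  · subst hn
    exact ⟨fun i => Fin.elim0 i, fun i => Fin.elim0 i, fun z => ⟨0, fun j => Fin.elim0 j⟩⟩
  haveI : NeZero n := ⟨hn.ne'⟩
  obtain ⟨hvΔ, hvext⟩ := hv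
  obtain ⟨e, einj, hedge, hbasisR, hsum⟩ := hfano v ⟨hvΔ, hvext⟩
  choose a ha1 ha2 using fun j => (hedge j).1
  -- integer basis property
  have ha_basis : ∀ z : Fin n → ℤ, ∃ c : Fin n → ℤ, ∀ p, z p = ∑ j, c j * a j p := by
    intro z
    obtain ⟨c, hc⟩ := hbasisR z
    refine ⟨c, fun p => ?_⟩
    have h1 := congrFun hc p
    rw [Finset.sum_apply] at h1
    simp only [ha2, Pi.smul_apply, smul_eq_mul] at h1
    exact_mod_cast h1
  -- Δ membership
  have hΔmem : ∀ x, x ∈ Δ ↔ ∀ i, dotz (η i) x ≤ 1 := by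
    intro x; rw [hΔ]; rfl
  -- nonpositivity of the pairings at facets through v
  have hA : ∀ i, dotz (η i) v = 1 → ∀ j, dzv (η i) (a j) ≤ 0 := by
    intro i hi j
    obtain ⟨t, ht, hex⟩ := (hedge j).2
    have hmem : v + t • e j ∈ Δ := hex.1 (right_mem_segment ℝ v (v + t • e j))
    rw [hΔmem] at hmem
    have h1 := hmem i
    rw [dotz_add, dotz_smul, hi, ha2 j, dotz_cast] at h1
    have h3 : ((dzv (η i) (a j) : ℝ)) ≤ 0 := by nlinarith
    exact_mod_cast h3
  -- row sums are -1
  have hB : ∀ i, dotz (η i) v = 1 → ∑ j, dzv (η i) (a j) = -1 := by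
    intro i hi
    have h0' := congrArg (dotz (η i)) hsum
    rw [dotz_add, dotz_sum, hi, dotz_zero] at h0'
    have h1 : ∑ j, dotz (η i) (e j) = ∑ j, ((dzv (η i) (a j) : ℝ)) :=
      Finset.sum_congr rfl fun j _ => by rw [ha2 j, dotz_cast]
    rw [h1] at h0'
    have h2 : ((∑ j, dzv (η i) (a j) : ℤ) : ℝ) = -1 := by push_cast; linarith
    exact_mod_cast h2
  -- unique index with pairing -1
  have hτex : ∀ i, dotz (η i) v = 1 →
      ∃ j, dzv (η i) (a j) = -1 ∧ ∀ j', j' ≠ j → dzv (η i) (a j') = 0 := by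
    intro i hi
    have hA' := hA i hi
    have hB' := hB i hi
    have hexneg : ∃ j, dzv (η i) (a j) < 0 := by
      by_contra h
      push_neg at h
      have : (0:ℤ) ≤ ∑ j, dzv (η i) (a j) := Finset.sum_nonneg fun j _ => h j
      omega
    obtain ⟨j, hj⟩ := hexneg
    have herase : ∑ j' ∈ Finset.univ.erase j, dzv (η i) (a j') ≤ 0 :=
      Finset.sum_nonpos fun j' _ => hA' j'
    have hsplit : dzv (η i) (a j) + ∑ j' ∈ Finset.univ.erase j, dzv (η i) (a j') = -1 := by
      have h := Finset.add_sum_erase Finset.univ (fun j' => dzv (η i) (a j')) (Finset.mem_univ j)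
      rw [h]; exact hB'
    have hjm : dzv (η i) (a j) = -1 := by omega
    have hzero : ∑ j' ∈ Finset.univ.erase j, dzv (η i) (a j') = 0 := by omega
    refine ⟨j, hjm, fun j' hj' => ?_⟩
    exact (Finset.sum_eq_zero_iff_of_nonpos fun x _ => hA' x).mp hzero j'
      (Finset.mem_erase.mpr ⟨hj', Finset.mem_univ _⟩)
  choose! τ hτ1 hτ2 using hτex
  -- surjectivity of τ on facets through v
  have hsurj : ∀ j, ∃ i, dotz (η i) v = 1 ∧ τ i = j := by
    intro j
    by_contra hcon
    push_neg at hcon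
    have hz : ∀ i, dotz (η i) v = 1 → dzv (η i) (a j) = 0 := fun i hi =>
      hτ2 i hi j (fun h => hcon i hi h.symm)
    set U : Set ℝ :=
      ⋂ i : Fin N, {t : ℝ | dotz (η i) v = 1 ∨ dotz (η i) v + t * dotz (η i) (e j) < 1} with hU
    have hUopen : IsOpen U := by
      refine isOpen_iInter_of_finite fun i => ?_
      by_cases hi : dotz (η i) v = 1
      · have : {t : ℝ | dotz (η i) v = 1 ∨ dotz (η i) v + t * dotz (η i) (e j) < 1} =
            Set.univ := by ext t; simp [hi]
        rw [this]; exact isOpen_univ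
      · have : {t : ℝ | dotz (η i) v = 1 ∨ dotz (η i) v + t * dotz (η i) (e j) < 1} =
            {t : ℝ | dotz (η i) v + t * dotz (η i) (e j) < 1} := by ext t; simp [hi]
        rw [this]
        exact isOpen_lt (by fun_prop) continuous_const
    have h0U : (0:ℝ) ∈ U := by
      refine Set.mem_iInter.mpr fun i => ?_
      by_cases hi : dotz (η i) v = 1
      · exact Or.inl hi
      · right
        have hle := (hΔmem v).mp hvΔ i
        have : dotz (η i) v < 1 := lt_of_le_of_ne hle hi
        simpa using this
    obtain ⟨ε, hε, hball⟩ := Metric.isOpen_iff.mp hUopen 0 h0U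
    have hmemΔ : ∀ t : ℝ, t ∈ U → v + t • e j ∈ Δ := by
      intro t ht
      rw [hΔmem]
      intro i
      rw [dotz_add, dotz_smul]
      rcases Set.mem_iInter.mp ht i with h1 | h2
      · rw [h1, ha2 j, dotz_cast, hz i h1]; simp
      · linarith
    have hmb : ∀ t : ℝ, |t| < ε → t ∈ U := by
      intro t htl
      apply hball
      simpa [Real.dist_eq] using htl
    have habs1 : |(ε/2 : ℝ)| < ε := by rw [abs_of_pos (by linarith)]; linarith
    have habs2 : |(-(ε/2) : ℝ)| < ε := by rw [abs_neg, abs_of_pos (by linarith)]; linarith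
    have hp := hmemΔ (ε/2) (hmb _ habs1)
    have hm := hmemΔ (-(ε/2)) (hmb _ habs2)
    have hop : v ∈ openSegment ℝ (v + (ε/2) • e j) (v + (-(ε/2)) • e j) := by
      refine ⟨1/2, 1/2, by norm_num, by norm_num, by norm_num, ?_⟩
      funext k
      simp only [Pi.add_apply, Pi.smul_apply, smul_eq_mul]
      ring
    have heq : v + (ε/2) • e j = v :=
      (hvext.2 hp hm (Set.mem_singleton v) hop)
    have hez : e j = 0 := by
      have h1 : (ε/2) • e j = 0 := by
        have := congrArg (fun x => x - v) heq
        simpa [add_sub_cancel_left] using this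
      rcases smul_eq_zero.mp h1 with h | h
      · exact absurd h (by positivity)
      · exact h
    have hcast : (fun k => ((a j k : ℝ))) = 0 := by rw [← ha2 j]; exact hez
    have : a j = 0 := by
      funext k
      have h2 := congrFun hcast k
      rw [Pi.zero_apply] at h2
      rw [Pi.zero_apply]
      exact_mod_cast h2
    exact (ha1 j).1 this
  -- pairing formula
  have hpair : ∀ i, dotz (η i) v = 1 → ∀ c l : Fin n → ℤ,
      (∀ p, l p = ∑ j, c j * a j p) → dzv (η i) l = -(c (τ i)) := by
    intro i hi c l hl
    have h1 : dzv (η i) l = ∑ j, c j * dzv (η i) (a j) := by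
      simp only [dzv]
      simp_rw [hl, Finset.mul_sum]
      rw [Finset.sum_comm]
      exact Finset.sum_congr rfl fun j _ => Finset.sum_congr rfl fun k _ => by ring
    rw [h1, ← Finset.add_sum_erase _ _ (Finset.mem_univ (τ i)), hτ1 i hi]
    have h2 : ∑ j ∈ Finset.univ.erase (τ i), c j * dzv (η i) (a j) = 0 :=
      Finset.sum_eq_zero fun j hj => by
        rw [hτ2 i hi j (Finset.mem_erase.mp hj).1, mul_zero]
    rw [h2]; ring
  -- lattice membership of F
  have hFlat : ∀ i (l : Fin n → ℤ), (fun p => (l p : ℝ)) ∈ Δ →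
      ((fun p => (l p : ℝ)) ∈ F i ↔ dzv (η i) l = 1) := by
    intro i l hl
    rw [hF]
    constructor
    · rintro ⟨-, h⟩
      rw [dotz_cast] at h
      exact_mod_cast h
    · intro h
      refine ⟨hl, ?_⟩
      rw [dotz_cast, h]; norm_num
  have hbound : ∀ i (l : Fin n → ℤ), (fun p => (l p : ℝ)) ∈ Δ →
      (fun p => -(l p : ℝ)) ∈ Δ → -1 ≤ dzv (η i) l ∧ dzv (η i) l ≤ 1 := by
    intro i l h1 h2
    rw [hΔmem] at h1 h2
    have b1 := h1 i
    have b2 := h2 i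
    rw [dotz_cast] at b1
    rw [dotz_neg_cast] at b2
    constructor
    · exact_mod_cast (by linarith : (-1:ℝ) ≤ ((dzv (η i) l : ℤ) : ℝ))
    · exact_mod_cast b1
  -- main step: extend by one new direction
  have step : ∀ J : Finset (Fin n), J ≠ Finset.univ →
      ∃ (j' : Fin n) (l c : Fin n → ℤ), j' ∉ J ∧ l ≠ 0 ∧
        (fun p => (l p : ℝ)) ∈ Δ ∧ (fun p => -(l p : ℝ)) ∈ Δ ∧
        c j' = -1 ∧ (∀ j, j ∉ J → j ≠ j' → c j = 0) ∧ (∀ p, l p = ∑ j, c j * a j p) := by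
    intro J hJ
    set I : Set (Fin N) := {i | dotz (η i) v = 1 ∧ τ i ∉ J} with hI
    obtain ⟨j₀, hj₀⟩ : ∃ j₀, j₀ ∉ J := by
      by_contra h
      push_neg at h
      exact hJ (Finset.eq_univ_iff_forall.mpr h)
    obtain ⟨i₀, hi₀v, hi₀τ⟩ := hsurj j₀
    have hIne : I.Nonempty := ⟨i₀, hi₀v, by rw [hi₀τ]; exact hj₀⟩
    have hIv : ∀ i ∈ I, v ∈ F i := by
      intro i hi
      rw [hF]
      exact ⟨hvΔ, hi.1⟩
    obtain ⟨l, hl0, hlΔ, hmlΔ, ⟨hlStar, hlnstar⟩, hmlnStar⟩ := hstarE I hIne hIv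
    obtain ⟨c, hc⟩ := ha_basis l
    have hIsub : ∀ i ∈ I, i ∈ StarIdx F I := fun i hi => Set.biInter_subset_of_mem hi
    obtain ⟨istar, histar, hlF⟩ : ∃ i', i' ∈ StarIdx F I ∧ (fun p => ((l p : ℝ))) ∈ F i' := by
      simpa [StarU, Set.mem_iUnion] using hlStar
    have hvF : v ∈ F istar := histar (Set.mem_biInter hIv)
    have histarv : dotz (η istar) v = 1 := by
      rw [hF] at hvF; exact hvF.2
    have hdz1 : dzv (η istar) l = 1 := (hFlat istar l hlΔ).mp hlF
    have hcstar : c (τ istar) = -1 := by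
      have := hpair istar histarv c l hc
      omega
    have hτnJ : τ istar ∉ J := by
      intro hmem
      obtain ⟨t, ht, hex⟩ := (hedge (τ istar)).2
      have hwΔ : v + t • e (τ istar) ∈ Δ := hex.1 (right_mem_segment ℝ _ _)
      have hwF : ∀ i ∈ I, v + t • e (τ istar) ∈ F i := by
        intro i hi
        rw [hF]
        refine ⟨hwΔ, ?_⟩
        rw [dotz_add, dotz_smul, hi.1, ha2, dotz_cast,
          hτ2 i hi.1 (τ istar) (fun h => hi.2 (h ▸ hmem))]
        simp
      have hwnF : v + t • e (τ istar) ∉ F istar := by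
        rw [hF]
        rintro ⟨-, habs⟩
        rw [dotz_add, dotz_smul, histarv, ha2, dotz_cast, hτ1 istar histarv] at habs
        push_cast at habs
        linarith
      exact hwnF (histar (Set.mem_biInter hwF))
    have hc0 : ∀ j, j ∉ J → j ≠ τ istar → c j = 0 := by
      intro j hjJ hjne
      obtain ⟨i, hiv, hiτ⟩ := hsurj j
      have hiI : i ∈ I := ⟨hiv, by rw [hiτ]; exact hjJ⟩
      have hine : i ≠ istar := fun h => hjne (by rw [← hiτ, h])
      have hnm1 : dzv (η i) l ≠ -1 := by
        intro habs
        apply hmlnStar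
        refine Set.mem_biUnion (hIsub i hiI) ?_
        rw [hF]
        refine ⟨hmlΔ, ?_⟩
        rw [dotz_neg_cast, habs]
        norm_num
      have hn1 : dzv (η i) l ≠ 1 := by
        intro habs
        apply hlnstar
        refine Set.mem_biUnion (hIsub i hiI) ?_
        refine Set.mem_biUnion histar ?_
        refine Set.mem_iUnion.mpr ⟨hine, ?_⟩
        exact ⟨(hFlat i l hlΔ).mpr habs, hlF⟩
      have hb := hbound i l hlΔ hmlΔ
      have hz0 : dzv (η i) l = 0 := by omega
      have hp := hpair i hiv c l hc
      rw [hiτ] at hp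
      omega
    exact ⟨τ istar, l, c, hτnJ, hl0, hlΔ, hmlΔ, hcstar, hc0, hc⟩
  -- the inductive construction
  have key : ∀ k : ℕ, k ≤ n → ∃ J : Finset (Fin n), J.card = k ∧
      ∃ lam : Fin n → (Fin n → ℤ),
        (∀ j ∈ J, lam j ≠ 0 ∧ (fun p => ((lam j p : ℝ))) ∈ Δ ∧
          (fun p => -(lam j p : ℝ)) ∈ Δ) ∧
        (∀ j ∈ J, a j ∈ Submodule.span ℤ (lam '' (J : Set (Fin n)))) := by
    intro k
    induction k with
    | zero => exact fun _ => ⟨∅, rfl, fun _ => 0, by simp, by simp⟩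
    | succ k ih =>
      intro hk
      obtain ⟨J, hJcard, lam, hlamS, hlamspan⟩ := ih (by omega)
      have hJne : J ≠ Finset.univ := by
        intro h
        rw [h, Finset.card_univ, Fintype.card_fin] at hJcard
        omega
      obtain ⟨j', l, c, hj'J, hl0, hlΔ, hmlΔ, hcj', hc0, hc⟩ := step J hJne
      refine ⟨insert j' J, by rw [Finset.card_insert_of_notMem hj'J, hJcard],
        Function.update lam j' l, ?_, ?_⟩
      · intro j hj
        rcases Finset.mem_insert.mp hj with rfl | h
        · rw [Function.update_self]
          exact ⟨hl0, hlΔ, hmlΔ⟩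
        · rw [Function.update_of_ne (show j ≠ j' by rintro rfl; exact hj'J h) l lam]
          exact hlamS j h
      · have hsub : lam '' (J : Set (Fin n)) ⊆
            Function.update lam j' l '' ((insert j' J : Finset (Fin n)) : Set (Fin n)) := by
          rintro x ⟨j, hj, rfl⟩
          exact ⟨j, by simp [hj],
            Function.update_of_ne (show j ≠ j' by rintro rfl; exact hj'J hj) l lam⟩
        have hmono := Submodule.span_mono (R := ℤ) hsub
        intro j hj
        rcases Finset.mem_insert.mp hj with h | h
        · rw [h]
          have hl_span : l ∈ Submodule.span ℤ
              (Function.update lam j' l '' ((insert j' J : Finset (Fin n)) : Set (Fin n))) :=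
            Submodule.subset_span ⟨j', by simp, Function.update_self _ _ _⟩
          have hrepr : a j' = -l + ∑ jj ∈ Finset.univ.erase j', c jj • a jj := by
            funext p
            have h1 := hc p
            rw [← Finset.add_sum_erase Finset.univ (fun jj => c jj * a jj p)
              (Finset.mem_univ j'), hcj'] at h1
            simp only [Pi.add_apply, Pi.neg_apply, Finset.sum_apply, Pi.smul_apply,
              smul_eq_mul]
            linarith
          rw [hrepr]
          refine Submodule.add_mem _ (Submodule.neg_mem _ hl_span) (Submodule.sum_mem _ ?_)
          intro jj hjj
          by_cases hjJ : jj ∈ J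
          · exact Submodule.smul_mem _ _ (hmono (hlamspan jj hjJ))
          · rw [hc0 jj hjJ (Finset.mem_erase.mp hjj).1, zero_smul]
            exact Submodule.zero_mem _
        · exact hmono (hlamspan j h)
  obtain ⟨J, hJcard, lam, hS, hspan⟩ := key n le_rfl
  have hJuniv : J = Finset.univ :=
    Finset.eq_univ_of_card J (by rw [hJcard, Fintype.card_fin])
  subst hJuniv
  refine ⟨lam, fun i => hS i (Finset.mem_univ i), ?_⟩
  intro z
  obtain ⟨d, hd⟩ := ha_basis z
  have hz : z ∈ Submodule.span ℤ (Set.range lam) := by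
    have hzeq : z = ∑ j, d j • a j := by
      funext p
      rw [hd p]
      simp [Finset.sum_apply]
    rw [hzeq]
    refine Submodule.sum_mem _ fun j _ => Submodule.smul_mem _ _ ?_
    have h1 := hspan j (Finset.mem_univ j)
    rwa [Finset.coe_univ, Set.image_univ] at h1
  obtain ⟨cc, hcc⟩ := (Submodule.mem_span_range_iff_exists_fun ℤ).mp hz
  refine ⟨cc, fun p => ?_⟩
  have := congrFun hcc p
  rw [Finset.sum_apply] at this
  simpa using this.symm
end

section
/- Let Δ ⊂ ℝⁿ be a monotone polytope with interior lattice point 0, and suppose facets F₁, F₂ meet in a codimension-2 face f = F₁ ∩ F₂. Choose coordinates so that F₁ = Δ ∩ {x₁ = −1} and F₂ = Δ ∩ {x₂ = −1}. If F₁ ∩ 𝒮(Δ) contains a ℤ-basis v₁,…,vₙ of ℤⁿ, then there exists v ∈ 𝒮(Δ) with v ∈ F₁ ∖ f and −v ∉ F₁ ∪ F₂; i.e., f satisfies the star Ewald condition. In particular, it is impossible for every element of a lattice basis contained in F₁ ∩ 𝒮(Δ) to have second coordinate equal to ±1. -/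
open Finset

/-- if a facet `F₁ = Δ ∩ {x₀ = -1}` of a monotone polytope contains a
`ℤ`-basis of symmetric lattice points, then the codimension-2 face `f = F₁ ∩ F₂`
(with `F₂ = Δ ∩ {x₁ = -1}`) satisfies the star Ewald condition; in particular some
basis element has second coordinate `0`. -/
theorem codim_two_star_ewald {n : ℕ}
    (V : Finset (Fin (n + 2) → ℝ)) (hVlat : ∀ v ∈ V, IsLatticePt v)
    (Δ : Set (Fin (n + 2) → ℝ)) (hΔ : Δ = convexHull ℝ (V : Set (Fin (n + 2) → ℝ)))
    (h0 : (0 : Fin (n + 2) → ℝ) ∈ interior Δ)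
    (huniq : ∀ w, IsLatticePt w → w ∈ interior Δ → w = 0)
    (hfano : ∀ v, IsVertex Δ v → VertexFanoSmoothAt Δ 0 v)
    -- the facets `F₁`, `F₂` lie on the hyperplanes `x₀ = -1`, `x₁ = -1`
    (hhalf0 : ∀ x ∈ Δ, -1 ≤ x 0) (hhalf1 : ∀ x ∈ Δ, -1 ≤ x 1)
    -- in these coordinates all symmetric lattice points have coordinates in {-1,0,1}
    (hScoords : ∀ l : Fin (n + 2) → ℤ, l ≠ 0 →
      (fun i => (l i : ℝ)) ∈ Δ → (fun i => -(l i : ℝ)) ∈ Δ →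
      ∀ i, l i = -1 ∨ l i = 0 ∨ l i = 1)
    -- a lattice basis `v₁, …, v_{n+2}` of symmetric points lying in `F₁`
    (v : Fin (n + 2) → (Fin (n + 2) → ℤ))
    (hvS : ∀ i, v i ≠ 0 ∧ (fun j => (v i j : ℝ)) ∈ Δ ∧ (fun j => -(v i j : ℝ)) ∈ Δ)
    (hvF1 : ∀ i, v i 0 = -1)
    (hbasis : ∀ z : Fin (n + 2) → ℤ, ∃ c : Fin (n + 2) → ℤ, ∀ j, z j = ∑ i, c i * v i j) :
    (∃ w : Fin (n + 2) → ℤ, w ≠ 0 ∧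
      (fun j => (w j : ℝ)) ∈ Δ ∧ (fun j => -(w j : ℝ)) ∈ Δ ∧
      -- `w ∈ F₁ ∖ f`
      w 0 = -1 ∧ w 1 ≠ -1 ∧
      -- `-w ∉ F₁ ∪ F₂`
      (-(w 0) ≠ -1 ∧ -(w 1) ≠ -1)) ∧
    -- it is impossible for every basis element to have second coordinate `±1`
    (∃ i, v i 1 ≠ 1 ∧ v i 1 ≠ -1) := by
  have key : ∃ i, v i 1 ≠ 1 ∧ v i 1 ≠ -1 := by
    by_contra h
    push_neg at h
    obtain ⟨c, hc⟩ := hbasis (fun j => if j = 0 then 1 else 0)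
    have h0' := hc 0
    have h1' := hc 1
    have h10 : (1 : Fin (n + 2)) ≠ 0 := by
      simp [Fin.ext_iff]
    rw [if_pos rfl] at h0'
    rw [if_neg h10] at h1'
    have hsum : ∑ i, c i = -1 := by
      have heq : ∑ i, c i * v i 0 = ∑ i, c i * (-1) :=
        Finset.sum_congr rfl (fun i _ => by rw [hvF1 i])
      rw [heq] at h0'
      simp only [mul_neg, mul_one, Finset.sum_neg_distrib] at h0'
      omega
    have hz : (0 : ZMod 2) = ∑ i, (c i : ZMod 2) * ((v i 1 : ℤ) : ZMod 2) := by
      have := congrArg (fun t : ℤ => (t : ZMod 2)) h1'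
      push_cast at this
      simpa using this
    have hone : ∀ i : Fin (n + 2), ((v i 1 : ℤ) : ZMod 2) = 1 := by
      intro i
      rcases eq_or_ne (v i 1) 1 with h1 | h1
      · rw [h1]; norm_num
      · rw [h i h1]; decide
    rw [Finset.sum_congr rfl (fun i _ => by rw [hone i, mul_one])] at hz
    have : ((∑ i, c i : ℤ) : ZMod 2) = (0 : ZMod 2) := by
      push_cast
      exact hz.symm
    rw [hsum] at this
    revert this
    decide
  obtain ⟨i, h1ne, h2ne⟩ := key
  have hvi1 : v i 1 = 0 := by
    rcases hScoords (v i) (hvS i).1 (hvS i).2.1 (hvS i).2.2 1 with h | h | h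
    · exact absurd h h2ne
    · exact h
    · exact absurd h h1ne
  exact ⟨⟨v i, (hvS i).1, (hvS i).2.1, (hvS i).2.2, hvF1 i,
    by rw [hvi1]; norm_num, by rw [hvF1 i]; norm_num, by rw [hvi1]; norm_num⟩,
    ⟨i, h1ne, h2ne⟩⟩
end

section
/- Consider the triangle T ⊂ ℝ² with vertices A = (0,5), B = (0,0), C = (3,0). Let U be the open set of points u ∈ int T that are displaceable by a probe, i.e., there is a facet F of T, a point w ∈ relint F, and a primitive integral vector λ integrally transverse to F, such that u lies on the segment from w in direction λ before exiting T, at affine distance from w strictly less than half the affine length of that segment. Then int T ∖ U contains a nonempty open subset of ℝ². -/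
open Finset

/-- The triangle with vertices `A = (0,5)`, `B = (0,0)`, `C = (3,0)`. -/
def Tset : Set (Fin 2 → ℝ) :=
  convexHull ℝ {![0, 5], ![0, 0], ![3, 0]}

/-- The three edges of the triangle, with their endpoints and primitive outward
integral normals: `AB` has normal `(-1,0)`, `BC` has normal `(0,-1)`, `CA` lies on
`5x + 3y = 15` with normal `(5,3)`. -/
def edgeData : Fin 3 → ((Fin 2 → ℝ) × (Fin 2 → ℝ) × (Fin 2 → ℤ)) :=
  ![(![0, 5], ![0, 0], ![-1, 0]),
    (![0, 0], ![3, 0], ![0, -1]),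
    (![3, 0], ![0, 5], ![5, 3])]

/-- `u` is displaceable by a probe of the triangle `Tset`: there is an edge `F`, a point
`w` in the relative interior of `F` and a primitive integral direction `λ` integrally
transverse to `F` such that `u = w + t·λ` lies on the probe at affine distance `t` from
`w` less than half the affine length of the probe. -/
def DisplaceableByProbe (u : Fin 2 → ℝ) : Prop :=
  ∃ j : Fin 3, ∃ w ∈ openSegment ℝ (edgeData j).1 (edgeData j).2.1,
    ∃ l : Fin 2 → ℤ, IsPrimitiveZ l ∧ |∑ i, l i * (edgeData j).2.2 i| = 1 ∧
      ∃ t : ℝ, 0 < t ∧ u = w + t • (fun i => (l i : ℝ)) ∧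
        2 * t < sSup {s : ℝ | 0 ≤ s ∧ w + s • (fun i => (l i : ℝ)) ∈ Tset}

lemma Tset_facts {p : Fin 2 → ℝ} (hp : p ∈ Tset) :
    0 ≤ p 0 ∧ 0 ≤ p 1 ∧ 5 * p 0 + 3 * p 1 ≤ 15 := by
  have hconv : Convex ℝ {q : Fin 2 → ℝ | 0 ≤ q 0 ∧ 0 ≤ q 1 ∧ 5 * q 0 + 3 * q 1 ≤ 15} := by
    rintro x ⟨hx0, hx1, hx2⟩ y ⟨hy0, hy1, hy2⟩ a b ha hb hab
    refine ⟨?_, ?_, ?_⟩ <;>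
      simp only [Pi.add_apply, Pi.smul_apply, smul_eq_mul] <;> nlinarith
  have hsub : ({![0, 5], ![0, 0], ![3, 0]} : Set (Fin 2 → ℝ)) ⊆
      {q : Fin 2 → ℝ | 0 ≤ q 0 ∧ 0 ≤ q 1 ∧ 5 * q 0 + 3 * q 1 ≤ 15} := by
    intro q hq
    simp only [Set.mem_insert_iff, Set.mem_singleton_iff] at hq
    rcases hq with rfl | rfl | rfl <;> norm_num
  exact convexHull_min hsub hconv hp

lemma mem_Tset {p : Fin 2 → ℝ} (h0 : 0 ≤ p 0) (h1 : 0 ≤ p 1) (h1' : p 1 < 5)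
    (h2 : 5 * p 0 + 3 * p 1 ≤ 15) : p ∈ Tset := by
  have hT : Convex ℝ Tset := convex_convexHull ℝ _
  have hA : (![0, 5] : Fin 2 → ℝ) ∈ Tset := subset_convexHull ℝ _ (by simp)
  have hB : (![0, 0] : Fin 2 → ℝ) ∈ Tset := subset_convexHull ℝ _ (by simp)
  have hC : (![3, 0] : Fin 2 → ℝ) ∈ Tset := subset_convexHull ℝ _ (by simp)
  have h5 : (0:ℝ) < 5 - p 1 := by linarith
  set c : ℝ := 5 * p 0 / (3 * (5 - p 1)) with hc
  have hc0 : 0 ≤ c := by positivity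
  have hc1 : c ≤ 1 := by
    rw [hc, div_le_one (by positivity)]; nlinarith
  have hr : c • (![3, 0] : Fin 2 → ℝ) + (1 - c) • (![0, 0] : Fin 2 → ℝ) ∈ Tset :=
    hT hC hB hc0 (by linarith) (by ring)
  have hfin : (p 1 / 5) • (![0, 5] : Fin 2 → ℝ) + (1 - p 1 / 5) •
      (c • (![3, 0] : Fin 2 → ℝ) + (1 - c) • (![0, 0] : Fin 2 → ℝ)) ∈ Tset :=
    hT hA hr (by positivity) (by linarith) (by ring)
  have hpe : p = (p 1 / 5) • (![0, 5] : Fin 2 → ℝ) + (1 - p 1 / 5) •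
      (c • (![3, 0] : Fin 2 → ℝ) + (1 - c) • (![0, 0] : Fin 2 → ℝ)) := by
    funext i
    fin_cases i <;>
      simp only [Pi.add_apply, Pi.smul_apply, smul_eq_mul, Fin.zero_eta, Fin.mk_one, Fin.isValue,
        Matrix.cons_val_zero, Matrix.cons_val_one, Matrix.head_cons, Matrix.cons_val_fin_one, hc] <;>
        field_simp <;> ring
  rw [hpe]; exact hfin

/-- the set of points of the triangle `ABC` not displaceable by probes
contains a nonempty open set. -/
theorem open_set_of_nondisplaceable_points :
    ∃ U : Set (Fin 2 → ℝ), IsOpen U ∧ U.Nonempty ∧ U ⊆ interior Tset ∧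
      ∀ u ∈ U, ¬ DisplaceableByProbe u := by
  refine ⟨(fun p : Fin 2 → ℝ => p 0) ⁻¹' Set.Ioo (147/100) (153/100) ∩
      (fun p : Fin 2 → ℝ => p 1) ⁻¹' Set.Ioo (157/100) (163/100), ?_, ?_, ?_, ?_⟩
  · exact (isOpen_Ioo.preimage (continuous_apply 0)).inter
      (isOpen_Ioo.preimage (continuous_apply 1))
  · refine ⟨![3/2, 8/5], ?_, ?_⟩ <;> simp <;> norm_num
  · apply interior_maximal
    · rintro p ⟨hp0, hp1⟩
      simp only [Set.mem_preimage, Set.mem_Ioo] at hp0 hp1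
      exact mem_Tset (by linarith [hp0.1]) (by linarith [hp1.1]) (by linarith [hp1.2])
        (by nlinarith [hp0.2, hp1.2])
    · exact (isOpen_Ioo.preimage (continuous_apply 0)).inter
        (isOpen_Ioo.preimage (continuous_apply 1))
  · rintro u ⟨hu0, hu1⟩ ⟨j, w, hw, l, hl, htr, t, ht, hueq, hlt⟩
    simp only [Set.mem_preimage, Set.mem_Ioo] at hu0 hu1
    obtain ⟨hx1, hx2⟩ := hu0
    obtain ⟨hy1, hy2⟩ := hu1
    have hu0' : u 0 = w 0 + t * (l 0 : ℝ) := by rw [hueq]; simp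
    have hu1' : u 1 = w 1 + t * (l 1 : ℝ) := by rw [hueq]; simp
    fin_cases j
    · -- edge AB : x = 0, normal (-1,0)
      simp only [edgeData, Fin.isValue, Matrix.cons_val_zero, Matrix.cons_val_one,
        Matrix.head_cons, Fin.mk_zero, Fin.mk_one, Fin.sum_univ_two] at hw htr
      obtain ⟨α, β, hα, hβ, hαβ, hweq⟩ := hw
      have hw0 : w 0 = 0 := by rw [← hweq]; simp
      have hl0 : l 0 = 1 ∨ l 0 = -1 := by
        rw [Int.abs_eq_natAbs] at htr; omega
      rcases hl0 with hl0 | hl0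
      · have hl0r : ((l 0 : ℤ) : ℝ) = 1 := by rw [hl0]; norm_num
        have hts : t = u 0 := by rw [hu0', hw0, hl0r]; ring
        have hsup : sSup {s : ℝ | 0 ≤ s ∧ (w + s • fun i => ((l i : ℝ))) ∈ Tset} ≤ 2 * t := by
          apply Real.sSup_le _ (by linarith)
          rintro s ⟨hs0, hsT⟩
          obtain ⟨hT0, hT1, hT2⟩ := Tset_facts hsT
          have e0 : (w + s • fun i => ((l i : ℝ))) 0 = s := by
            simp [hw0, hl0r]
          have e1 : (w + s • fun i => ((l i : ℝ))) 1 = w 1 + s * (l 1 : ℝ) := by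
            simp
          rw [e1] at hT1
          rw [e0, e1] at hT2
          have hmcase : (0 ≤ l 1) ∨ l 1 = -1 ∨ l 1 ≤ -2 := by omega
          rcases hmcase with hm | hm | hm
          · have hm' : (0:ℝ) ≤ (l 1 : ℝ) := by exact_mod_cast hm
            by_contra hcon
            push_neg at hcon
            nlinarith [mul_nonneg hm' (by linarith : (0:ℝ) ≤ s - 2*t),
              mul_nonneg hm' ht.le]
          · have hm' : ((l 1 : ℤ) : ℝ) = -1 := by rw [hm]; norm_num
            rw [hm'] at hT2 hu1'
            linarith
          · have hm' : ((l 1 : ℤ) : ℝ) ≤ -2 := by exact_mod_cast hm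
            by_contra hcon
            push_neg at hcon
            nlinarith [mul_nonneg (by linarith : (0:ℝ) ≤ -((l 1 : ℤ) : ℝ) - 2)
              (by linarith : (0:ℝ) ≤ s - t)]
        linarith
      · have hl0r : ((l 0 : ℤ) : ℝ) = -1 := by rw [hl0]; norm_num
        rw [hl0r] at hu0'
        linarith
    · -- edge BC : y = 0, normal (0,-1)
      simp only [edgeData, Fin.isValue, Matrix.cons_val_zero, Matrix.cons_val_one,
        Matrix.head_cons, Fin.mk_zero, Fin.mk_one, Fin.sum_univ_two] at hw htr
      obtain ⟨α, β, hα, hβ, hαβ, hweq⟩ := hw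
      have hw1 : w 1 = 0 := by rw [← hweq]; simp
      have hw0 : w 0 = β * 3 := by rw [← hweq]; simp
      have hl1 : l 1 = 1 ∨ l 1 = -1 := by
        rw [Int.abs_eq_natAbs] at htr; omega
      rcases hl1 with hl1 | hl1
      · have hl1r : ((l 1 : ℤ) : ℝ) = 1 := by rw [hl1]; norm_num
        have hts : t = u 1 := by rw [hu1', hw1, hl1r]; ring
        have hmcase : 0 ≤ l 0 ∨ l 0 ≤ -1 := by omega
        rcases hmcase with hm | hm
        · have hm' : (0:ℝ) ≤ (l 0 : ℝ) := by exact_mod_cast hm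
          have hsup : sSup {s : ℝ | 0 ≤ s ∧ (w + s • fun i => ((l i : ℝ))) ∈ Tset} ≤ 2 * t := by
            apply Real.sSup_le _ (by linarith)
            rintro s ⟨hs0, hsT⟩
            obtain ⟨hT0, hT1, hT2⟩ := Tset_facts hsT
            have e0 : (w + s • fun i => ((l i : ℝ))) 0 = w 0 + s * (l 0 : ℝ) := by
              simp
            have e1 : (w + s • fun i => ((l i : ℝ))) 1 = s := by
              simp [hw1, hl1r]
            rw [e0, e1] at hT2
            by_contra hcon
            push_neg at hcon
            nlinarith [mul_nonneg hm' (by linarith : (0:ℝ) ≤ s - 2*t),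
              mul_nonneg hm' ht.le]
          linarith
        · have hm' : ((l 0 : ℤ) : ℝ) ≤ -1 := by exact_mod_cast hm
          have hβ1 : β < 1 := by linarith
          nlinarith [mul_nonneg (by linarith : (0:ℝ) ≤ -((l 0 : ℤ) : ℝ) - 1) ht.le]
      · have hl1r : ((l 1 : ℤ) : ℝ) = -1 := by rw [hl1]; norm_num
        rw [hl1r] at hu1'
        linarith
    · -- edge CA : 5x+3y = 15, normal (5,3)
      simp only [edgeData, Fin.isValue, Matrix.cons_val_zero, Matrix.cons_val_one,
        Matrix.head_cons, Fin.mk_zero, Fin.mk_one, Fin.sum_univ_two,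
        show ((⟨2, by omega⟩ : Fin 3) : Fin 3) = 2 from rfl, Matrix.cons_val_two,
        Matrix.tail_cons] at hw htr
      obtain ⟨α, β, hα, hβ, hαβ, hweq⟩ := hw
      have hw0 : w 0 = α * 3 := by rw [← hweq]; simp
      have hw1 : w 1 = β * 5 := by rw [← hweq]; simp
      rw [Int.abs_eq_natAbs] at htr
      have hcase : 5 * l 0 + 3 * l 1 = 1 ∨ 5 * l 0 + 3 * l 1 = -1 := by omega
      have hsum : 5 * u 0 + 3 * u 1 = 15 + t * (5 * ((l 0 : ℤ) : ℝ) + 3 * ((l 1 : ℤ) : ℝ)) := by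
        linear_combination 5 * hu0' + 3 * hu1' + 5 * hw0 + 3 * hw1 + 15 * hαβ
      rcases hcase with hc | hc
      · have hr : 5 * ((l 0 : ℤ) : ℝ) + 3 * ((l 1 : ℤ) : ℝ) = 1 := by exact_mod_cast hc
        rw [hr] at hsum
        linarith
      · have hr : 5 * ((l 0 : ℤ) : ℝ) + 3 * ((l 1 : ℤ) : ℝ) = -1 := by exact_mod_cast hc
        rw [hr] at hsum
        have hta : t = 15 - 5 * u 0 - 3 * u 1 := by linarith
        have hacase : 1 ≤ l 0 ∨ l 0 ≤ -2 := by omega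
        have hα1 : α < 1 := by linarith
        rcases hacase with ha | ha
        · have ha' : (1:ℝ) ≤ ((l 0 : ℤ) : ℝ) := by exact_mod_cast ha
          nlinarith [mul_nonneg (by linarith : (0:ℝ) ≤ ((l 0 : ℤ) : ℝ) - 1) ht.le]
        · have ha' : ((l 0 : ℤ) : ℝ) ≤ -2 := by exact_mod_cast ha
          nlinarith [mul_nonneg (by linarith : (0:ℝ) ≤ -((l 0 : ℤ) : ℝ) - 2) ht.le]
end

section
/- Let Δ ⊂ ℝ³ be a monotone polytope with interior lattice point 0 and let F be a small facet of Δ, i.e. a triangular facet all of whose edges have affine length 1. Choose coordinates so the vertices of F are (−1,−1,−1), (−1,0,−1), (−1,−1,0) and F ⊂ {x₁ = −1}. Then the vertex-Fano condition forces: the primitive edge vector of Δ at (−1,0,−1) transverse to F is (1,2,0), and at (−1,−1,0) it is (1,0,2); hence Δ contains the points (0,−1,−1), (0,2,−1), (0,−1,2). -/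
open Finset

lemma mem_seg_mul {v e : Fin 3 → ℝ} {t s : ℝ} (ht : 0 < t) (h0 : 0 ≤ s) (hst : s ≤ t) :
    v + s • e ∈ segment ℝ v (v + t • e) := by
  refine ⟨1 - s / t, s / t, by
    have : s / t ≤ 1 := (div_le_one ht).2 hst
    linarith, div_nonneg h0 ht.le, by ring, ?_⟩
  have h1 : (s / t) * t = s := div_mul_cancel₀ s ht.ne'
  rw [smul_add, ← add_assoc, ← add_smul, sub_add_cancel, one_smul, smul_smul, h1]

lemma seg_param {v e : Fin 3 → ℝ} {t : ℝ} (ht : 0 ≤ t) {x : Fin 3 → ℝ}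
    (hx : x ∈ segment ℝ v (v + t • e)) : ∃ s, 0 ≤ s ∧ s ≤ t ∧ x = v + s • e := by
  obtain ⟨α, β, hα, hβ, hs, hx⟩ := hx
  refine ⟨β * t, mul_nonneg hβ ht, by nlinarith, ?_⟩
  rw [← hx]
  rw [smul_add, ← add_assoc, ← add_smul, hs, one_smul, smul_smul]

lemma ext_both {A B : Set (Fin 3 → ℝ)} (h : IsExtreme ℝ A B) {x y z : Fin 3 → ℝ}
    (hx : x ∈ A) (hy : y ∈ A) (hz : z ∈ B) (hzxy : z ∈ openSegment ℝ x y) : x ∈ B ∧ y ∈ B :=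
  ⟨h.2 hx hy hz hzxy, h.right_mem_of_mem_openSegment hx hy hz hzxy⟩

lemma endpoint_extreme {Δ : Set (Fin 3 → ℝ)} {v e : Fin 3 → ℝ} {t : ℝ} (ht : 0 < t)
    (he : e ≠ 0) (hS : IsExtreme ℝ Δ (segment ℝ v (v + t • e))) :
    IsExtreme ℝ Δ {v + t • e} := by
  refine hS.trans ⟨Set.singleton_subset_iff.2 (right_mem_segment ℝ _ _), ?_⟩
  rintro x1 hx1 x2 hx2 x (rfl : x = v + t • e) hxo
  obtain ⟨s1, hs10, hs1t, rfl⟩ := seg_param ht.le hx1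
  obtain ⟨s2, hs20, hs2t, rfl⟩ := seg_param ht.le hx2
  obtain ⟨θ1, θ2, hθ1, hθ2, hθs, heq⟩ := hxo
  have hco : (θ1 * s1 + θ2 * s2 - t) • e = 0 := by
    have h2 : θ1 • (v + s1 • e) + θ2 • (v + s2 • e) - (v + t • e) =
        (θ1 * s1 + θ2 * s2 - t) • e := by
      have h3 : θ1 • v + θ2 • v - v = 0 := by
        rw [← add_smul, hθs, one_smul, sub_self]
      simp only [smul_add, smul_smul, sub_smul, add_smul]
      rw [show θ1 • v + (θ1 * s1) • e + (θ2 • v + (θ2 * s2) • e) - (v + t • e)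
          = (θ1 • v + θ2 • v - v) + ((θ1 * s1) • e + ((θ2 * s2) • e - t • e)) from by abel,
        h3]
      abel
    rw [← h2, heq, sub_self]
  have hsc : θ1 * s1 + θ2 * s2 - t = 0 := by
    rcases smul_eq_zero.1 hco with h | h
    · exact h
    · exact absurd h he
  have h1 : s1 = t ∧ s2 = t := by
    constructor <;> nlinarith [mul_nonneg hθ1.le (sub_nonneg.2 hs1t),
      mul_nonneg hθ2.le (sub_nonneg.2 hs2t)]
  rw [h1.1]; rfl

lemma comb4 {Δ : Set (Fin 3 → ℝ)} (hconv : Convex ℝ Δ) {p1 p2 p3 p4 : Fin 3 → ℝ}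
    (h1 : p1 ∈ Δ) (h2 : p2 ∈ Δ) (h3 : p3 ∈ Δ) (h4 : p4 ∈ Δ) {w1 w2 w3 w4 : ℝ}
    (hw1 : 0 ≤ w1) (hw2 : 0 ≤ w2) (hw3 : 0 ≤ w3) (hw4 : 0 ≤ w4)
    (hsum : w1 + w2 + w3 + w4 = 1) :
    w1 • p1 + w2 • p2 + w3 • p3 + w4 • p4 ∈ Δ := by
  have := hconv.sum_mem (t := (Finset.univ : Finset (Fin 4)))
    (w := ![w1, w2, w3, w4]) (z := ![p1, p2, p3, p4])
    (by intro i _; fin_cases i <;> assumption)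
    (by simp [Fin.sum_univ_four]; linarith)
    (by intro i _; fin_cases i <;> assumption)
  simpa [Fin.sum_univ_four] using this

lemma interior_scale {Δ : Set (Fin 3 → ℝ)} (hconv : Convex ℝ Δ)
    (h0 : (0 : Fin 3 → ℝ) ∈ interior Δ) {y : Fin 3 → ℝ} (hy : y ∈ Δ) {c : ℝ}
    (hc0 : 0 ≤ c) (hc1 : c < 1) : c • y ∈ interior Δ := by
  rcases eq_or_lt_of_le hc0 with h | h
  · rw [← h, zero_smul]; exact h0
  · apply hconv.openSegment_interior_closure_subset_interior h0 (subset_closure hy)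
    exact ⟨1 - c, c, by linarith, h, by ring, by simp⟩

lemma prim_int_of_mul {a : Fin 3 → ℤ} (hprim : IsPrimitiveZ a) {t : ℝ}
    (ht : 0 < t) (h : ∀ i, ∃ z : ℤ, t * (a i : ℝ) = z) : ∃ n : ℤ, 1 ≤ n ∧ t = n := by
  choose z hz using h
  set g1 : ℕ := Int.gcd (a 0) (a 1) with hg1
  set g : ℕ := Int.gcd (g1 : ℤ) (a 2) with hg
  have hgd : ∀ i, (g : ℤ) ∣ a i := by
    intro i
    fin_cases i
    · exact dvd_trans (Int.gcd_dvd_left _ _) (Int.gcd_dvd_left _ _)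
    · exact dvd_trans (Int.gcd_dvd_left _ _) (Int.gcd_dvd_right _ _)
    · exact Int.gcd_dvd_right _ _
  have hunit : IsUnit ((g : ℤ)) := hprim.2 _ hgd
  have hgone : ((g : ℕ) : ℤ) = 1 := by
    rcases Int.isUnit_iff.1 hunit with h | h
    · exact h
    · exfalso; omega
  have b2 : ((g : ℕ) : ℤ) = (g1 : ℤ) * Int.gcdA (g1 : ℤ) (a 2) + a 2 * Int.gcdB (g1 : ℤ) (a 2) :=
    Int.gcd_eq_gcd_ab _ _
  have b1 : ((g1 : ℕ) : ℤ) = a 0 * Int.gcdA (a 0) (a 1) + a 1 * Int.gcdB (a 0) (a 1) :=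
    Int.gcd_eq_gcd_ab _ _
  set P := Int.gcdA (a 0) (a 1); set Q := Int.gcdB (a 0) (a 1)
  set X := Int.gcdA (g1 : ℤ) (a 2); set Y := Int.gcdB (g1 : ℤ) (a 2)
  have key : (1 : ℤ) = a 0 * (P * X) + a 1 * (Q * X) + a 2 * Y := by
    rw [← hgone, b2, b1]; ring
  refine ⟨z 0 * (P * X) + z 1 * (Q * X) + z 2 * Y, ?_, ?_⟩
  case refine_2 =>
    have h1 : t = t * ((1 : ℤ) : ℝ) := by norm_num
    rw [h1, key]
    push_cast
    rw [← hz 0, ← hz 1, ← hz 2]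
    ring
  case refine_1 =>
    have h2 : t = ((z 0 * (P * X) + z 1 * (Q * X) + z 2 * Y : ℤ) : ℝ) := by
      have h1 : t = t * ((1 : ℤ) : ℝ) := by norm_num
      rw [h1, key]; push_cast; rw [← hz 0, ← hz 1, ← hz 2]; ring
    have : (0 : ℝ) < ((z 0 * (P * X) + z 1 * (Q * X) + z 2 * Y : ℤ) : ℝ) := h2 ▸ ht
    have h4 : (0:ℤ) < z 0 * (P * X) + z 1 * (Q * X) + z 2 * Y := by exact_mod_cast this
    omega

lemma prim_ne_zero {a : Fin 3 → ℤ} (hprim : IsPrimitiveZ a) :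
    (fun i => (a i : ℝ)) ≠ 0 := by
  intro h
  apply hprim.1
  funext i
  have := congrFun h i
  simpa using this

lemma edge_reach (V : Finset (Fin 3 → ℝ)) (hVlat : ∀ v ∈ V, IsLatticePt v)
    (Δ : Set (Fin 3 → ℝ)) (hΔ : Δ = convexHull ℝ (V : Set (Fin 3 → ℝ)))
    {v : Fin 3 → ℝ} (hvlat : IsLatticePt v)
    {a : Fin 3 → ℤ} (hprim : IsPrimitiveZ a)
    (hedge : IsEdgeDir Δ v (fun i => (a i : ℝ))) {s : ℝ} (hs0 : 0 ≤ s) (hs1 : s ≤ 1) :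
    v + s • (fun i => (a i : ℝ)) ∈ Δ := by
  obtain ⟨t, ht, hS⟩ := hedge
  set e : Fin 3 → ℝ := fun i => (a i : ℝ) with he_def
  have hw : IsExtreme ℝ Δ {v + t • e} := endpoint_extreme ht (prim_ne_zero hprim) hS
  rw [hΔ] at hw
  have hwV : v + t • e ∈ V := by
    exact_mod_cast extremePoints_convexHull_subset (isExtreme_singleton.mp hw)
  have hwlat : IsLatticePt (v + t • e) := hVlat _ hwV
  have hmul : ∀ i, ∃ z : ℤ, t * (a i : ℝ) = z := by
    intro i
    obtain ⟨z1, hz1⟩ := hwlat i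
    obtain ⟨z2, hz2⟩ := hvlat i
    refine ⟨z1 - z2, ?_⟩
    have : v i + t * (a i : ℝ) = z1 := by simpa [he_def] using hz1
    push_cast
    rw [← this, hz2]
    ring
  obtain ⟨n, hn1, hnt⟩ := prim_int_of_mul hprim ht hmul
  have h1t : (1 : ℝ) ≤ t := by
    rw [hnt]; exact_mod_cast hn1
  exact hS.1 (mem_seg_mul ht hs0 (hs1.trans h1t))

lemma zero_dir_v2 {Δ : Set (Fin 3 → ℝ)} (hconv : Convex ℝ Δ)
    (hm1 : ![(-1:ℝ),-1,-1] ∈ Δ) (hm2 : ![(-1:ℝ),0,-1] ∈ Δ) (hm3 : ![(-1:ℝ),-1,0] ∈ Δ)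
    (hFsub : ∀ x ∈ Δ, x 0 = -1 → (-1 ≤ x 1 ∧ -1 ≤ x 2 ∧ x 1 + x 2 ≤ -1))
    {a : Fin 3 → ℤ} (hprim : IsPrimitiveZ a)
    (hedge : IsEdgeDir Δ ![(-1:ℝ),0,-1] (fun i => (a i : ℝ)))
    (h00 : a 0 = 0) : a = ![0,-1,0] ∨ a = ![0,-1,1] := by
  obtain ⟨t, ht, hS⟩ := hedge
  set e : Fin 3 → ℝ := fun i => (a i : ℝ) with he_def
  set v : Fin 3 → ℝ := ![(-1:ℝ),0,-1] with hv_def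
  have hpt : v + t • e ∈ Δ := hS.1 (right_mem_segment ℝ _ _)
  have hpt0 : (v + t • e) 0 = -1 := by
    simp [hv_def, he_def, h00]
  obtain ⟨hc1, hc2, hc12⟩ := hFsub _ hpt hpt0
  have hv1 : (v + t • e) 1 = t * (a 1 : ℝ) := by
    simp [hv_def, he_def]
  have hv2 : (v + t • e) 2 = -1 + t * (a 2 : ℝ) := by
    show v 2 + t * (a 2 : ℝ) = -1 + t * (a 2:ℝ)
    norm_num [hv_def, Matrix.cons_val_two]
  rw [hv2] at hc2
  rw [hv1, hv2] at hc12
  -- integer constraints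
  have ha2 : 0 ≤ a 2 := by
    by_contra hcon
    push_neg at hcon
    have h1 : (a 2 : ℝ) < 0 := by exact_mod_cast hcon
    nlinarith
  have ha12 : a 1 + a 2 ≤ 0 := by
    by_contra hcon
    push_neg at hcon
    have h1 : (1:ℝ) ≤ (a 1 : ℝ) + (a 2 : ℝ) := by exact_mod_cast hcon
    nlinarith
  -- main dichotomy
  have hkey : a 2 = 0 ∨ a 1 + a 2 = 0 := by
    by_contra hcon
    push_neg at hcon
    obtain ⟨hk1, hk2⟩ := hcon
    have ha2' : 1 ≤ a 2 := by omega
    have ha2r : (1:ℝ) ≤ (a 2 : ℝ) := by exact_mod_cast ha2'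
    have ha12' : a 1 + a 2 ≤ -1 := by omega
    have hd : (3:ℝ) ≤ ((a 2 : ℝ) - (a 1 : ℝ)) := by
      have : (3:ℤ) ≤ a 2 - a 1 := by omega
      have h2 : ((3:ℤ):ℝ) ≤ ((a 2 - a 1 : ℤ) : ℝ) := by exact_mod_cast this
      push_cast at h2
      linarith
    set d : ℝ := (a 2 : ℝ) - (a 1 : ℝ) with hd_def
    have hdpos : (0:ℝ) < d := by linarith
    set δ : ℝ := min t (1/(2*d)) with hδ_def
    have hδpos : 0 < δ := lt_min ht (by positivity)
    have hδt : δ ≤ t := min_le_left _ _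
    have hδd : δ ≤ 1/(2*d) := min_le_right _ _
    have hδd' : 2*δ*d ≤ 1 := by
      have h2 : δ*(2*d) ≤ (1/(2*d))*(2*d) := mul_le_mul_of_nonneg_right hδd (by positivity)
      have h3 : (1/(2*d))*(2*d) = 1 := by field_simp
      calc 2*δ*d = δ*(2*d) := by ring
        _ ≤ (1/(2*d))*(2*d) := h2
        _ = 1 := h3
    set w : ℝ := 2*δ*(-(a 1 : ℝ) - (a 2 : ℝ)) with hw_def
    set w' : ℝ := 2*δ*(a 2 : ℝ) with hw'_def
    have hcast1 : (0:ℝ) ≤ -(a 1 : ℝ) - (a 2 : ℝ) := by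
      have : (0:ℤ) ≤ -(a 1) - a 2 := by omega
      exact_mod_cast this
    have hwpos : 0 ≤ w := by
      apply mul_nonneg (by linarith) hcast1
    have hw'pos : 0 < w' := by
      apply mul_pos (by linarith)
      linarith
    have hw1 : w ≤ 1 := by
      have h1 : -(a 1 : ℝ) - (a 2 : ℝ) ≤ d := by rw [hd_def]; linarith
      nlinarith [mul_le_mul_of_nonneg_left h1 (by linarith : (0:ℝ) ≤ 2*δ), hδd']
    have hw'1 : w' ≤ 1 := by
      have h1 : (a 2 : ℝ) ≤ d := by
        rw [hd_def]
        have : (a 1 : ℝ) ≤ 0 := by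
          have : a 1 ≤ 0 := by omega
          exact_mod_cast this
        linarith
      nlinarith [mul_le_mul_of_nonneg_left h1 (by linarith : (0:ℝ) ≤ 2*δ), hδd']
    set X : Fin 3 → ℝ := (1 - w) • v + w • ![(-1:ℝ),-1,-1] with hX_def
    set Y : Fin 3 → ℝ := (1 - w') • v + w' • ![(-1:ℝ),-1,0] with hY_def
    have hXmem : X ∈ Δ := hconv hm2 hm1 (by linarith) hwpos (by ring)
    have hYmem : Y ∈ Δ := hconv hm2 hm3 (by linarith) hw'pos.le (by ring)
    have hY2 : Y 2 = -1 + w' := by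
      show (1 - w') * v 2 + w' * (0:ℝ) = -1 + w'
      norm_num [hv_def, Matrix.cons_val_two]; ring
    have hY1 : Y 1 = -w' := by
      show (1 - w') * v 1 + w' * (-1:ℝ) = -w'
      norm_num [hv_def]
    have hX2 : X 2 = -1 := by
      show (1 - w) * v 2 + w * (-1:ℝ) = -1
      norm_num [hv_def, Matrix.cons_val_two]; ring
    have hXY : X ≠ Y := by
      intro h
      have h2 := congrFun h 2
      rw [hX2, hY2] at h2
      linarith
    have hmid : (1/2 : ℝ) • X + (1/2 : ℝ) • Y = v + δ • e := by
      funext j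
      have hj : ∀ (j : Fin 3), ((1/2 : ℝ) • X + (1/2 : ℝ) • Y) j
          = (1/2) * X j + (1/2) * Y j := fun _ => rfl
      fin_cases j <;> rw [hj] <;>
        show _ = v _ + δ * (a _ : ℝ) <;>
        simp [hX_def, hY_def, hv_def, hw_def, hw'_def, h00] <;> push_cast <;> ring
    have hp : v + δ • e ∈ segment ℝ v (v + t • e) := mem_seg_mul ht hδpos.le hδt
    have happ := ext_both hS hXmem hYmem hp
      ⟨1/2, 1/2, by norm_num, by norm_num, by norm_num, hmid⟩
    obtain ⟨s, hs0, hst, hYeq⟩ := seg_param ht.le happ.2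
    have hYe2 : Y 2 = -1 + s * (a 2 : ℝ) := by
      rw [hYeq]
      show v 2 + s * (a 2:ℝ) = _
      norm_num [hv_def, Matrix.cons_val_two]
    have hYe1 : Y 1 = s * (a 1 : ℝ) := by
      rw [hYeq]
      show v 1 + s * (a 1:ℝ) = _
      norm_num [hv_def]
    have hsa2 : s * (a 2 : ℝ) = 2*δ*(a 2 : ℝ) := by
      rw [hY2] at hYe2; rw [hw'_def] at hYe2; linarith
    have hs2δ : s = 2*δ := by
      have ha2pos : (0:ℝ) < (a 2 : ℝ) := by linarith
      exact mul_right_cancel₀ ha2pos.ne' hsa2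
    have ha1a2 : 2*δ*((a 1 : ℝ) + (a 2 : ℝ)) = 0 := by
      rw [hY1, hw'_def, hs2δ] at hYe1
      ring_nf
      ring_nf at hYe1
      linarith
    have ha1a2' : (a 1 : ℝ) + (a 2 : ℝ) = 0 := by
      rcases mul_eq_zero.1 ha1a2 with h | h
      · exfalso; nlinarith
      · exact h
    have : a 1 + a 2 = 0 := by exact_mod_cast ha1a2'
    omega
  -- conclude
  rcases hkey with h | h
  · left
    have ha1neg : a 1 ≤ 0 := by omega
    have ha1ne : a 1 ≠ 0 := by
      intro h0'
      apply hprim.1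
      funext i; fin_cases i <;> simp [h00, h0', h]
    have hunit : IsUnit (a 1) := by
      apply hprim.2
      intro i; fin_cases i <;> simp [h00, h]
    have ha1m : a 1 = -1 := by
      rcases Int.isUnit_iff.1 hunit with h' | h' <;> omega
    funext i; fin_cases i <;> simp [h00, h, ha1m]
  · right
    have ha2ne : a 2 ≠ 0 := by
      intro h0'
      have ha1z : a 1 = 0 := by omega
      apply hprim.1
      funext i; fin_cases i <;> simp [h00, h0', ha1z]
    have hunit : IsUnit (a 2) := by
      apply hprim.2
      intro i
      fin_cases i
      · show a 2 ∣ a 0; simp [h00]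
      · show a 2 ∣ a 1; exact ⟨-1, by omega⟩
      · show a 2 ∣ a 2; exact dvd_rfl
    have ha21 : a 2 = 1 := by
      rcases Int.isUnit_iff.1 hunit with h' | h' <;> omega
    have ha1m : a 1 = -1 := by omega
    funext i; fin_cases i <;> simp [h00, ha21, ha1m]

lemma zero_dir_v1 {Δ : Set (Fin 3 → ℝ)} (hconv : Convex ℝ Δ)
    (hm1 : ![(-1:ℝ),-1,-1] ∈ Δ) (hm2 : ![(-1:ℝ),0,-1] ∈ Δ) (hm3 : ![(-1:ℝ),-1,0] ∈ Δ)
    (hFsub : ∀ x ∈ Δ, x 0 = -1 → (-1 ≤ x 1 ∧ -1 ≤ x 2 ∧ x 1 + x 2 ≤ -1))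
    {a : Fin 3 → ℤ} (hprim : IsPrimitiveZ a)
    (hedge : IsEdgeDir Δ ![(-1:ℝ),-1,-1] (fun i => (a i : ℝ)))
    (h00 : a 0 = 0) : a = ![0,1,0] ∨ a = ![0,0,1] := by
  obtain ⟨t, ht, hS⟩ := hedge
  set e : Fin 3 → ℝ := fun i => (a i : ℝ) with he_def
  set v : Fin 3 → ℝ := ![(-1:ℝ),-1,-1] with hv_def
  have hpt : v + t • e ∈ Δ := hS.1 (right_mem_segment ℝ _ _)
  have hpt0 : (v + t • e) 0 = -1 := by simp [hv_def, he_def, h00]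
  obtain ⟨hc1, hc2, hc12⟩ := hFsub _ hpt hpt0
  have hv1 : (v + t • e) 1 = -1 + t * (a 1 : ℝ) := by
    show v 1 + t * (a 1 : ℝ) = _; norm_num [hv_def]
  have hv2 : (v + t • e) 2 = -1 + t * (a 2 : ℝ) := by
    show v 2 + t * (a 2 : ℝ) = _; norm_num [hv_def, Matrix.cons_val_two]
  rw [hv1] at hc1
  rw [hv2] at hc2
  have ha1 : 0 ≤ a 1 := by
    by_contra hcon
    push_neg at hcon
    have h1 : (a 1 : ℝ) < 0 := by exact_mod_cast hcon
    nlinarith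
  have ha2 : 0 ≤ a 2 := by
    by_contra hcon
    push_neg at hcon
    have h1 : (a 2 : ℝ) < 0 := by exact_mod_cast hcon
    nlinarith
  have hkey : a 1 = 0 ∨ a 2 = 0 := by
    by_contra hcon
    push_neg at hcon
    obtain ⟨hk1, hk2⟩ := hcon
    have ha1' : (1:ℝ) ≤ (a 1 : ℝ) := by exact_mod_cast (by omega : (1:ℤ) ≤ a 1)
    have ha2' : (1:ℝ) ≤ (a 2 : ℝ) := by exact_mod_cast (by omega : (1:ℤ) ≤ a 2)
    set d : ℝ := (a 1 : ℝ) + (a 2 : ℝ) with hd_def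
    have hdpos : (0:ℝ) < d := by linarith
    set δ : ℝ := min t (1/(2*d)) with hδ_def
    have hδpos : 0 < δ := lt_min ht (by positivity)
    have hδt : δ ≤ t := min_le_left _ _
    have hδd : δ ≤ 1/(2*d) := min_le_right _ _
    have hδd' : 2*δ*d ≤ 1 := by
      have h2 : δ*(2*d) ≤ (1/(2*d))*(2*d) := mul_le_mul_of_nonneg_right hδd (by positivity)
      have h3 : (1/(2*d))*(2*d) = 1 := by field_simp
      calc 2*δ*d = δ*(2*d) := by ring
        _ ≤ (1/(2*d))*(2*d) := h2
        _ = 1 := h3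
    set w : ℝ := 2*δ*(a 1 : ℝ) with hw_def
    set w' : ℝ := 2*δ*(a 2 : ℝ) with hw'_def
    have hwpos : 0 < w := mul_pos (by linarith) (by linarith)
    have hw'pos : 0 < w' := mul_pos (by linarith) (by linarith)
    have hw1 : w ≤ 1 := by
      have h1 : (a 1 : ℝ) ≤ d := by rw [hd_def]; linarith
      nlinarith [mul_le_mul_of_nonneg_left h1 (by linarith : (0:ℝ) ≤ 2*δ), hδd']
    have hw'1 : w' ≤ 1 := by
      have h1 : (a 2 : ℝ) ≤ d := by rw [hd_def]; linarith
      nlinarith [mul_le_mul_of_nonneg_left h1 (by linarith : (0:ℝ) ≤ 2*δ), hδd']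
    set X : Fin 3 → ℝ := (1 - w) • v + w • ![(-1:ℝ),0,-1] with hX_def
    set Y : Fin 3 → ℝ := (1 - w') • v + w' • ![(-1:ℝ),-1,0] with hY_def
    have hXmem : X ∈ Δ := hconv hm1 hm2 (by linarith) hwpos.le (by ring)
    have hYmem : Y ∈ Δ := hconv hm1 hm3 (by linarith) hw'pos.le (by ring)
    have hX1 : X 1 = -1 + w := by
      show (1 - w) * v 1 + w * (0:ℝ) = _; norm_num [hv_def]; ring
    have hY1 : Y 1 = -1 := by
      show (1 - w') * v 1 + w' * (-1:ℝ) = _; norm_num [hv_def]; ring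
    have hY2 : Y 2 = -1 + w' := by
      show (1 - w') * v 2 + w' * (0:ℝ) = _; norm_num [hv_def, Matrix.cons_val_two]; ring
    have hXY : X ≠ Y := by
      intro h
      have h2 := congrFun h 1
      rw [hX1, hY1] at h2
      linarith
    have hmid : (1/2 : ℝ) • X + (1/2 : ℝ) • Y = v + δ • e := by
      funext j
      have hj : ∀ (j : Fin 3), ((1/2 : ℝ) • X + (1/2 : ℝ) • Y) j
          = (1/2) * X j + (1/2) * Y j := fun _ => rfl
      fin_cases j <;> rw [hj] <;>
        show _ = v _ + δ * (a _ : ℝ) <;>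
        simp [hX_def, hY_def, hv_def, hw_def, hw'_def, h00] <;> ring
    have hp : v + δ • e ∈ segment ℝ v (v + t • e) := mem_seg_mul ht hδpos.le hδt
    have happ := ext_both hS hXmem hYmem hp
      ⟨1/2, 1/2, by norm_num, by norm_num, by norm_num, hmid⟩
    obtain ⟨s, hs0, hst, hYeq⟩ := seg_param ht.le happ.2
    have hYe1 : Y 1 = -1 + s * (a 1 : ℝ) := by
      rw [hYeq]; show v 1 + s * (a 1:ℝ) = _; norm_num [hv_def]
    have hYe2 : Y 2 = -1 + s * (a 2 : ℝ) := by
      rw [hYeq]; show v 2 + s * (a 2:ℝ) = _; norm_num [hv_def, Matrix.cons_val_two]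
    have hs_zero : s = 0 := by
      rw [hY1] at hYe1
      have : s * (a 1 : ℝ) = 0 := by linarith
      rcases mul_eq_zero.1 this with h | h
      · exact h
      · exfalso; rw [h] at ha1'; linarith
    rw [hY2, hs_zero] at hYe2
    simp at hYe2
    nlinarith
  rcases hkey with h | h
  · right
    have ha2ne : a 2 ≠ 0 := by
      intro h0'
      apply hprim.1
      funext i; fin_cases i <;> simp [h00, h0', h]
    have hunit : IsUnit (a 2) := by
      apply hprim.2
      intro i; fin_cases i
      · show a 2 ∣ a 0; simp [h00]
      · show a 2 ∣ a 1; simp [h]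
      · show a 2 ∣ a 2; exact dvd_rfl
    have ha21 : a 2 = 1 := by
      rcases Int.isUnit_iff.1 hunit with h' | h' <;> omega
    funext i; fin_cases i <;> simp [h00, h, ha21]
  · left
    have ha1ne : a 1 ≠ 0 := by
      intro h0'
      apply hprim.1
      funext i; fin_cases i <;> simp [h00, h0', h]
    have hunit : IsUnit (a 1) := by
      apply hprim.2
      intro i; fin_cases i
      · show a 1 ∣ a 0; simp [h00]
      · show a 1 ∣ a 1; exact dvd_rfl
      · show a 1 ∣ a 2; simp [h]
    have ha11 : a 1 = 1 := by
      rcases Int.isUnit_iff.1 hunit with h' | h' <;> omega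
    funext i; fin_cases i <;> simp [h00, h, ha11]

lemma zero_dir_v3 {Δ : Set (Fin 3 → ℝ)} (hconv : Convex ℝ Δ)
    (hm1 : ![(-1:ℝ),-1,-1] ∈ Δ) (hm2 : ![(-1:ℝ),0,-1] ∈ Δ) (hm3 : ![(-1:ℝ),-1,0] ∈ Δ)
    (hFsub : ∀ x ∈ Δ, x 0 = -1 → (-1 ≤ x 1 ∧ -1 ≤ x 2 ∧ x 1 + x 2 ≤ -1))
    {a : Fin 3 → ℤ} (hprim : IsPrimitiveZ a)
    (hedge : IsEdgeDir Δ ![(-1:ℝ),-1,0] (fun i => (a i : ℝ)))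
    (h00 : a 0 = 0) : a = ![0,0,-1] ∨ a = ![0,1,-1] := by
  obtain ⟨t, ht, hS⟩ := hedge
  set e : Fin 3 → ℝ := fun i => (a i : ℝ) with he_def
  set v : Fin 3 → ℝ := ![(-1:ℝ),-1,0] with hv_def
  have hpt : v + t • e ∈ Δ := hS.1 (right_mem_segment ℝ _ _)
  have hpt0 : (v + t • e) 0 = -1 := by simp [hv_def, he_def, h00]
  obtain ⟨hc1, hc2, hc12⟩ := hFsub _ hpt hpt0
  have hv1 : (v + t • e) 1 = -1 + t * (a 1 : ℝ) := by
    show v 1 + t * (a 1 : ℝ) = _; norm_num [hv_def]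
  have hv2 : (v + t • e) 2 = t * (a 2 : ℝ) := by
    show v 2 + t * (a 2 : ℝ) = _; norm_num [hv_def, Matrix.cons_val_two]
  rw [hv1] at hc1
  rw [hv1, hv2] at hc12
  have ha1 : 0 ≤ a 1 := by
    by_contra hcon
    push_neg at hcon
    have h1 : (a 1 : ℝ) < 0 := by exact_mod_cast hcon
    nlinarith
  have ha12 : a 1 + a 2 ≤ 0 := by
    by_contra hcon
    push_neg at hcon
    have h1 : (1:ℝ) ≤ (a 1 : ℝ) + (a 2 : ℝ) := by exact_mod_cast hcon
    nlinarith
  have hkey : a 1 = 0 ∨ a 1 + a 2 = 0 := by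
    by_contra hcon
    push_neg at hcon
    obtain ⟨hk1, hk2⟩ := hcon
    have ha1' : (1:ℝ) ≤ (a 1 : ℝ) := by exact_mod_cast (by omega : (1:ℤ) ≤ a 1)
    have hs12 : (1:ℝ) ≤ -(a 1:ℝ) - (a 2:ℝ) := by
      exact_mod_cast (by omega : (1:ℤ) ≤ -(a 1) - a 2)
    set d : ℝ := -(a 2 : ℝ) with hd_def
    have hdpos : (0:ℝ) < d := by rw [hd_def]; linarith
    set δ : ℝ := min t (1/(2*d)) with hδ_def
    have hδpos : 0 < δ := lt_min ht (by positivity)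
    have hδt : δ ≤ t := min_le_left _ _
    have hδd : δ ≤ 1/(2*d) := min_le_right _ _
    have hδd' : 2*δ*d ≤ 1 := by
      have h2 : δ*(2*d) ≤ (1/(2*d))*(2*d) := mul_le_mul_of_nonneg_right hδd (by positivity)
      have h3 : (1/(2*d))*(2*d) = 1 := by field_simp
      calc 2*δ*d = δ*(2*d) := by ring
        _ ≤ (1/(2*d))*(2*d) := h2
        _ = 1 := h3
    set w : ℝ := 2*δ*(a 1 : ℝ) with hw_def
    set w' : ℝ := 2*δ*(-(a 1:ℝ) - (a 2:ℝ)) with hw'_def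
    have hwpos : 0 < w := mul_pos (by linarith) (by linarith)
    have hw'pos : 0 < w' := mul_pos (by linarith) (by linarith)
    have hw1 : w ≤ 1 := by
      have h1 : (a 1 : ℝ) ≤ d := by rw [hd_def]; linarith
      nlinarith [mul_le_mul_of_nonneg_left h1 (by linarith : (0:ℝ) ≤ 2*δ), hδd']
    have hw'1 : w' ≤ 1 := by
      have h1 : -(a 1 : ℝ) - (a 2:ℝ) ≤ d := by rw [hd_def]; linarith
      nlinarith [mul_le_mul_of_nonneg_left h1 (by linarith : (0:ℝ) ≤ 2*δ), hδd']
    set X : Fin 3 → ℝ := (1 - w) • v + w • ![(-1:ℝ),0,-1] with hX_def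
    set Y : Fin 3 → ℝ := (1 - w') • v + w' • ![(-1:ℝ),-1,-1] with hY_def
    have hXmem : X ∈ Δ := hconv hm3 hm2 (by linarith) hwpos.le (by ring)
    have hYmem : Y ∈ Δ := hconv hm3 hm1 (by linarith) hw'pos.le (by ring)
    have hX1 : X 1 = -1 + w := by
      show (1 - w) * v 1 + w * (0:ℝ) = _; norm_num [hv_def]; ring
    have hY1 : Y 1 = -1 := by
      show (1 - w') * v 1 + w' * (-1:ℝ) = _; norm_num [hv_def]; ring
    have hY2 : Y 2 = -w' := by
      show (1 - w') * v 2 + w' * (-1:ℝ) = _; norm_num [hv_def, Matrix.cons_val_two]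
    have hXY : X ≠ Y := by
      intro h
      have h2 := congrFun h 1
      rw [hX1, hY1] at h2
      linarith
    have hmid : (1/2 : ℝ) • X + (1/2 : ℝ) • Y = v + δ • e := by
      funext j
      have hj : ∀ (j : Fin 3), ((1/2 : ℝ) • X + (1/2 : ℝ) • Y) j
          = (1/2) * X j + (1/2) * Y j := fun _ => rfl
      fin_cases j <;> rw [hj] <;>
        show _ = v _ + δ * (a _ : ℝ) <;>
        simp [hX_def, hY_def, hv_def, hw_def, hw'_def, h00] <;> ring
    have hp : v + δ • e ∈ segment ℝ v (v + t • e) := mem_seg_mul ht hδpos.le hδt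
    have happ := ext_both hS hXmem hYmem hp
      ⟨1/2, 1/2, by norm_num, by norm_num, by norm_num, hmid⟩
    obtain ⟨s, hs0, hst, hYeq⟩ := seg_param ht.le happ.2
    have hYe1 : Y 1 = -1 + s * (a 1 : ℝ) := by
      rw [hYeq]; show v 1 + s * (a 1:ℝ) = _; norm_num [hv_def]
    have hYe2 : Y 2 = s * (a 2 : ℝ) := by
      rw [hYeq]; show v 2 + s * (a 2:ℝ) = _; norm_num [hv_def, Matrix.cons_val_two]
    have hs_zero : s = 0 := by
      rw [hY1] at hYe1
      have : s * (a 1 : ℝ) = 0 := by linarith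
      rcases mul_eq_zero.1 this with h | h
      · exact h
      · exfalso; rw [h] at ha1'; linarith
    rw [hY2, hs_zero] at hYe2
    simp at hYe2
    nlinarith
  rcases hkey with h | h
  · left
    have ha2neg : a 2 ≤ 0 := by omega
    have ha2ne : a 2 ≠ 0 := by
      intro h0'
      apply hprim.1
      funext i; fin_cases i <;> simp [h00, h0', h]
    have hunit : IsUnit (a 2) := by
      apply hprim.2
      intro i; fin_cases i
      · show a 2 ∣ a 0; simp [h00]
      · show a 2 ∣ a 1; simp [h]
      · show a 2 ∣ a 2; exact dvd_rfl
    have ha2m : a 2 = -1 := by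
      rcases Int.isUnit_iff.1 hunit with h' | h' <;> omega
    funext i; fin_cases i <;> simp [h00, h, ha2m]
  · right
    have ha1ne : a 1 ≠ 0 := by
      intro h0'
      have h2' : a 2 = 0 := by omega
      apply hprim.1
      funext i; fin_cases i <;> simp [h00, h0', h2']
    have hunit : IsUnit (a 1) := by
      apply hprim.2
      intro i; fin_cases i
      · show a 1 ∣ a 0; simp [h00]
      · show a 1 ∣ a 1; exact dvd_rfl
      · show a 1 ∣ a 2; exact ⟨-1, by omega⟩
    have ha11 : a 1 = 1 := by
      rcases Int.isUnit_iff.1 hunit with h' | h' <;> omega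
    have ha2m : a 2 = -1 := by omega
    funext i; fin_cases i <;> simp [h00, ha11, ha2m]

lemma trans_edge_v2 {Δ : Set (Fin 3 → ℝ)} (hconv : Convex ℝ Δ)
    (hm1 : ![(-1:ℝ),-1,-1] ∈ Δ) (hm2 : ![(-1:ℝ),0,-1] ∈ Δ) (hm3 : ![(-1:ℝ),-1,0] ∈ Δ)
    (hFsub : ∀ x ∈ Δ, x 0 = -1 → (-1 ≤ x 1 ∧ -1 ≤ x 2 ∧ x 1 + x 2 ≤ -1))
    (hhalf : ∀ x ∈ Δ, -1 ≤ x 0)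
    (hfano2 : VertexFanoSmoothAt Δ 0 ![(-1:ℝ),0,-1]) :
    IsEdgeDir Δ ![(-1:ℝ),0,-1] ![(1:ℝ),2,0] := by
  obtain ⟨E, hinj, hprops, -, hsum⟩ := hfano2
  have hPIV := fun i => (hprops i).1
  choose A hAprim hAeq using hPIV
  have hEval : ∀ i m, E i m = (A i m : ℝ) := fun i m => congrFun (hAeq i) m
  set v : Fin 3 → ℝ := ![(-1:ℝ),0,-1] with hv_def
  have hm1' : ![(-1:ℝ),-1,-1] ∈ Δ := by first | exact hm1 | exact hv_def ▸ hm1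
  have hm2' : ![(-1:ℝ),0,-1] ∈ Δ := by first | exact hm2 | exact hv_def ▸ hm2
  have hm3' : ![(-1:ℝ),-1,0] ∈ Δ := by first | exact hm3 | exact hv_def ▸ hm3
  -- nonneg first coordinates
  have hnn : ∀ i, 0 ≤ A i 0 := by
    intro i
    obtain ⟨t, ht, hS⟩ := (hprops i).2
    have hpt : v + t • E i ∈ Δ := hS.1 (right_mem_segment ℝ _ _)
    have h1 : -1 ≤ v 0 + t * E i 0 := hhalf _ hpt
    rw [hEval] at h1
    have hv0 : v 0 = -1 := by norm_num [hv_def]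
    rw [hv0] at h1
    by_contra hcon
    push_neg at hcon
    have h2 : (A i 0 : ℝ) < 0 := by exact_mod_cast hcon
    nlinarith
  -- sum of vectors
  have hsum' : ∀ m, E 0 m + E 1 m + E 2 m = (![(1:ℝ),0,1]) m := by
    intro m
    have h2 : v m + (E 0 m + E 1 m + E 2 m) = 0 := by
      have h1 := congrFun hsum m
      rw [Pi.add_apply, Finset.sum_apply, Fin.sum_univ_three] at h1
      simpa using h1
    fin_cases m <;> [skip; skip; skip] <;>
      simp only [hv_def] at h2 ⊢ <;> norm_num at h2 ⊢ <;> linarith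
  have hsum0 : A 0 0 + A 1 0 + A 2 0 = 1 := by
    have h1 := hsum' 0
    rw [hEval, hEval, hEval] at h1
    norm_num at h1
    exact_mod_cast h1
  have h3 : (A 0 0 = 0 ∧ A 1 0 = 0) ∨ (A 0 0 = 0 ∧ A 2 0 = 0) ∨
      (A 1 0 = 0 ∧ A 2 0 = 0) := by
    have := hnn 0; have := hnn 1; have := hnn 2
    omega
  -- helper to finish given the two flat indices
  have main : ∀ i j k : Fin 3, i ≠ j → (∀ m, E i m + E j m + E k m = (![(1:ℝ),0,1]) m) →
      A i 0 = 0 → A j 0 = 0 → E k = ![(1:ℝ),2,0] := by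
    intro i j k hij hsumijk hAi0 hAj0
    have hdi := zero_dir_v2 hconv hm1' hm2' hm3' hFsub (hAprim i) (hAeq i ▸ (hprops i).2) hAi0
    have hdj := zero_dir_v2 hconv hm1' hm2' hm3' hFsub (hAprim j) (hAeq j ▸ (hprops j).2) hAj0
    have hne : A i ≠ A j := by
      intro h
      exact hinj.ne hij (by rw [hAeq i, hAeq j, h])
    have hpairsum : ∀ m, E i m + E j m = (![(0:ℝ),-2,1]) m := by
      rcases hdi with h1 | h1 <;> rcases hdj with h2 | h2
      · exact absurd (h1.trans h2.symm) hne
      · intro m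
        rw [hEval i, hEval j, h1, h2]
        fin_cases m <;> norm_num
      · intro m
        rw [hEval i, hEval j, h1, h2]
        fin_cases m <;> norm_num
      · exact absurd (h1.trans h2.symm) hne
    funext m
    have hs := hsumijk m
    have hp := hpairsum m
    fin_cases m <;> norm_num at hs hp ⊢ <;> linarith
  rcases h3 with ⟨h1, h2⟩ | ⟨h1, h2⟩ | ⟨h1, h2⟩
  · have := main 0 1 2 (by decide) (fun m => hsum' m) h1 h2
    exact this ▸ (hprops 2).2
  · have := main 0 2 1 (by decide) (fun m => by have := hsum' m; linarith) h1 h2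
    exact this ▸ (hprops 1).2
  · have := main 1 2 0 (by decide) (fun m => by have := hsum' m; linarith) h1 h2
    exact this ▸ (hprops 0).2

lemma trans_edge_v1 {Δ : Set (Fin 3 → ℝ)} (hconv : Convex ℝ Δ)
    (hm1 : ![(-1:ℝ),-1,-1] ∈ Δ) (hm2 : ![(-1:ℝ),0,-1] ∈ Δ) (hm3 : ![(-1:ℝ),-1,0] ∈ Δ)
    (hFsub : ∀ x ∈ Δ, x 0 = -1 → (-1 ≤ x 1 ∧ -1 ≤ x 2 ∧ x 1 + x 2 ≤ -1))
    (hhalf : ∀ x ∈ Δ, -1 ≤ x 0)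
    (hfano2 : VertexFanoSmoothAt Δ 0 ![(-1:ℝ),-1,-1]) :
    IsEdgeDir Δ ![(-1:ℝ),-1,-1] ![(1:ℝ),0,0] := by
  obtain ⟨E, hinj, hprops, -, hsum⟩ := hfano2
  have hPIV := fun i => (hprops i).1
  choose A hAprim hAeq using hPIV
  have hEval : ∀ i m, E i m = (A i m : ℝ) := fun i m => congrFun (hAeq i) m
  set v : Fin 3 → ℝ := ![(-1:ℝ),-1,-1] with hv_def
  have hm1' : ![(-1:ℝ),-1,-1] ∈ Δ := by first | exact hm1 | exact hv_def ▸ hm1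
  have hm2' : ![(-1:ℝ),0,-1] ∈ Δ := by first | exact hm2 | exact hv_def ▸ hm2
  have hm3' : ![(-1:ℝ),-1,0] ∈ Δ := by first | exact hm3 | exact hv_def ▸ hm3
  -- nonneg first coordinates
  have hnn : ∀ i, 0 ≤ A i 0 := by
    intro i
    obtain ⟨t, ht, hS⟩ := (hprops i).2
    have hpt : v + t • E i ∈ Δ := hS.1 (right_mem_segment ℝ _ _)
    have h1 : -1 ≤ v 0 + t * E i 0 := hhalf _ hpt
    rw [hEval] at h1
    have hv0 : v 0 = -1 := by norm_num [hv_def]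
    rw [hv0] at h1
    by_contra hcon
    push_neg at hcon
    have h2 : (A i 0 : ℝ) < 0 := by exact_mod_cast hcon
    nlinarith
  -- sum of vectors
  have hsum' : ∀ m, E 0 m + E 1 m + E 2 m = (![(1:ℝ),1,1]) m := by
    intro m
    have h2 : v m + (E 0 m + E 1 m + E 2 m) = 0 := by
      have h1 := congrFun hsum m
      rw [Pi.add_apply, Finset.sum_apply, Fin.sum_univ_three] at h1
      simpa using h1
    fin_cases m <;> [skip; skip; skip] <;>
      simp only [hv_def] at h2 ⊢ <;> norm_num at h2 ⊢ <;> linarith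
  have hsum0 : A 0 0 + A 1 0 + A 2 0 = 1 := by
    have h1 := hsum' 0
    rw [hEval, hEval, hEval] at h1
    norm_num at h1
    exact_mod_cast h1
  have h3 : (A 0 0 = 0 ∧ A 1 0 = 0) ∨ (A 0 0 = 0 ∧ A 2 0 = 0) ∨
      (A 1 0 = 0 ∧ A 2 0 = 0) := by
    have := hnn 0; have := hnn 1; have := hnn 2
    omega
  -- helper to finish given the two flat indices
  have main : ∀ i j k : Fin 3, i ≠ j → (∀ m, E i m + E j m + E k m = (![(1:ℝ),1,1]) m) →
      A i 0 = 0 → A j 0 = 0 → E k = ![(1:ℝ),0,0] := by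
    intro i j k hij hsumijk hAi0 hAj0
    have hdi := zero_dir_v1 hconv hm1' hm2' hm3' hFsub (hAprim i) (hAeq i ▸ (hprops i).2) hAi0
    have hdj := zero_dir_v1 hconv hm1' hm2' hm3' hFsub (hAprim j) (hAeq j ▸ (hprops j).2) hAj0
    have hne : A i ≠ A j := by
      intro h
      exact hinj.ne hij (by rw [hAeq i, hAeq j, h])
    have hpairsum : ∀ m, E i m + E j m = (![(0:ℝ),1,1]) m := by
      rcases hdi with h1 | h1 <;> rcases hdj with h2 | h2
      · exact absurd (h1.trans h2.symm) hne
      · intro m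
        rw [hEval i, hEval j, h1, h2]
        fin_cases m <;> norm_num
      · intro m
        rw [hEval i, hEval j, h1, h2]
        fin_cases m <;> norm_num
      · exact absurd (h1.trans h2.symm) hne
    funext m
    have hs := hsumijk m
    have hp := hpairsum m
    fin_cases m <;> norm_num at hs hp ⊢ <;> linarith
  rcases h3 with ⟨h1, h2⟩ | ⟨h1, h2⟩ | ⟨h1, h2⟩
  · have := main 0 1 2 (by decide) (fun m => hsum' m) h1 h2
    exact this ▸ (hprops 2).2
  · have := main 0 2 1 (by decide) (fun m => by have := hsum' m; linarith) h1 h2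
    exact this ▸ (hprops 1).2
  · have := main 1 2 0 (by decide) (fun m => by have := hsum' m; linarith) h1 h2
    exact this ▸ (hprops 0).2

lemma trans_edge_v3 {Δ : Set (Fin 3 → ℝ)} (hconv : Convex ℝ Δ)
    (hm1 : ![(-1:ℝ),-1,-1] ∈ Δ) (hm2 : ![(-1:ℝ),0,-1] ∈ Δ) (hm3 : ![(-1:ℝ),-1,0] ∈ Δ)
    (hFsub : ∀ x ∈ Δ, x 0 = -1 → (-1 ≤ x 1 ∧ -1 ≤ x 2 ∧ x 1 + x 2 ≤ -1))
    (hhalf : ∀ x ∈ Δ, -1 ≤ x 0)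
    (hfano2 : VertexFanoSmoothAt Δ 0 ![(-1:ℝ),-1,0]) :
    IsEdgeDir Δ ![(-1:ℝ),-1,0] ![(1:ℝ),0,2] := by
  obtain ⟨E, hinj, hprops, -, hsum⟩ := hfano2
  have hPIV := fun i => (hprops i).1
  choose A hAprim hAeq using hPIV
  have hEval : ∀ i m, E i m = (A i m : ℝ) := fun i m => congrFun (hAeq i) m
  set v : Fin 3 → ℝ := ![(-1:ℝ),-1,0] with hv_def
  have hm1' : ![(-1:ℝ),-1,-1] ∈ Δ := by first | exact hm1 | exact hv_def ▸ hm1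
  have hm2' : ![(-1:ℝ),0,-1] ∈ Δ := by first | exact hm2 | exact hv_def ▸ hm2
  have hm3' : ![(-1:ℝ),-1,0] ∈ Δ := by first | exact hm3 | exact hv_def ▸ hm3
  -- nonneg first coordinates
  have hnn : ∀ i, 0 ≤ A i 0 := by
    intro i
    obtain ⟨t, ht, hS⟩ := (hprops i).2
    have hpt : v + t • E i ∈ Δ := hS.1 (right_mem_segment ℝ _ _)
    have h1 : -1 ≤ v 0 + t * E i 0 := hhalf _ hpt
    rw [hEval] at h1
    have hv0 : v 0 = -1 := by norm_num [hv_def]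
    rw [hv0] at h1
    by_contra hcon
    push_neg at hcon
    have h2 : (A i 0 : ℝ) < 0 := by exact_mod_cast hcon
    nlinarith
  -- sum of vectors
  have hsum' : ∀ m, E 0 m + E 1 m + E 2 m = (![(1:ℝ),1,0]) m := by
    intro m
    have h2 : v m + (E 0 m + E 1 m + E 2 m) = 0 := by
      have h1 := congrFun hsum m
      rw [Pi.add_apply, Finset.sum_apply, Fin.sum_univ_three] at h1
      simpa using h1
    fin_cases m <;> [skip; skip; skip] <;>
      simp only [hv_def] at h2 ⊢ <;> norm_num at h2 ⊢ <;> linarith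
  have hsum0 : A 0 0 + A 1 0 + A 2 0 = 1 := by
    have h1 := hsum' 0
    rw [hEval, hEval, hEval] at h1
    norm_num at h1
    exact_mod_cast h1
  have h3 : (A 0 0 = 0 ∧ A 1 0 = 0) ∨ (A 0 0 = 0 ∧ A 2 0 = 0) ∨
      (A 1 0 = 0 ∧ A 2 0 = 0) := by
    have := hnn 0; have := hnn 1; have := hnn 2
    omega
  -- helper to finish given the two flat indices
  have main : ∀ i j k : Fin 3, i ≠ j → (∀ m, E i m + E j m + E k m = (![(1:ℝ),1,0]) m) →
      A i 0 = 0 → A j 0 = 0 → E k = ![(1:ℝ),0,2] := by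
    intro i j k hij hsumijk hAi0 hAj0
    have hdi := zero_dir_v3 hconv hm1' hm2' hm3' hFsub (hAprim i) (hAeq i ▸ (hprops i).2) hAi0
    have hdj := zero_dir_v3 hconv hm1' hm2' hm3' hFsub (hAprim j) (hAeq j ▸ (hprops j).2) hAj0
    have hne : A i ≠ A j := by
      intro h
      exact hinj.ne hij (by rw [hAeq i, hAeq j, h])
    have hpairsum : ∀ m, E i m + E j m = (![(0:ℝ),1,-2]) m := by
      rcases hdi with h1 | h1 <;> rcases hdj with h2 | h2
      · exact absurd (h1.trans h2.symm) hne
      · intro m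
        rw [hEval i, hEval j, h1, h2]
        fin_cases m <;> norm_num
      · intro m
        rw [hEval i, hEval j, h1, h2]
        fin_cases m <;> norm_num
      · exact absurd (h1.trans h2.symm) hne
    funext m
    have hs := hsumijk m
    have hp := hpairsum m
    fin_cases m <;> norm_num at hs hp ⊢ <;> linarith
  rcases h3 with ⟨h1, h2⟩ | ⟨h1, h2⟩ | ⟨h1, h2⟩
  · have := main 0 1 2 (by decide) (fun m => hsum' m) h1 h2
    exact this ▸ (hprops 2).2
  · have := main 0 2 1 (by decide) (fun m => by have := hsum' m; linarith) h1 h2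
    exact this ▸ (hprops 1).2
  · have := main 1 2 0 (by decide) (fun m => by have := hsum' m; linarith) h1 h2
    exact this ▸ (hprops 0).2

set_option maxHeartbeats 1000000 in
lemma uniq_v2 {Δ : Set (Fin 3 → ℝ)} (hconv : Convex ℝ Δ)
    (hm1 : ![(-1:ℝ),-1,-1] ∈ Δ) (hm2 : ![(-1:ℝ),0,-1] ∈ Δ) (hm3 : ![(-1:ℝ),-1,0] ∈ Δ)
    (hhalf : ∀ x ∈ Δ, -1 ≤ x 0)
    (h0 : (0 : Fin 3 → ℝ) ∈ interior Δ)
    (huniq : ∀ w, IsLatticePt w → w ∈ interior Δ → w = 0)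
    (hT : ![(0:ℝ),2,-1] ∈ Δ) (hA : ![(0:ℝ),-1,-1] ∈ Δ) (hB : ![(0:ℝ),-1,2] ∈ Δ)
    (hTedge : IsEdgeDir Δ ![(-1:ℝ),0,-1] ![(1:ℝ),2,0])
    {a : Fin 3 → ℤ} (hprim : IsPrimitiveZ a)
    (hedge : IsEdgeDir Δ ![(-1:ℝ),0,-1] (fun i => (a i : ℝ)))
    (hPmem : ∀ s : ℝ, 0 ≤ s → s ≤ 1 →
      ![(-1:ℝ),0,-1] + s • (fun i => (a i : ℝ)) ∈ Δ)
    (h00 : a 0 ≠ 0) : a = ![1,2,0] := by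
  obtain ⟨t, ht, hS⟩ := hedge
  set e : Fin 3 → ℝ := fun i => (a i : ℝ) with he_def
  set v : Fin 3 → ℝ := ![(-1:ℝ),0,-1] with hv_def
  have hm1' : ![(-1:ℝ),-1,-1] ∈ Δ := hm1
  have hm3' : ![(-1:ℝ),-1,0] ∈ Δ := hm3
  have hv0 : v 0 = -1 := rfl
  have hv1 : v 1 = 0 := rfl
  have hv2 : v 2 = -1 := rfl
  have ha0 : 1 ≤ a 0 := by
    have hpt : v + t • e ∈ Δ := hS.1 (right_mem_segment ℝ _ _)
    have h1 : -1 ≤ v 0 + t * (a 0 : ℝ) := hhalf _ hpt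
    rw [hv0] at h1
    have h2 : 0 ≤ a 0 := by
      by_contra hcon
      push_neg at hcon
      have h3 : (a 0 : ℝ) < 0 := by exact_mod_cast hcon
      nlinarith
    omega
  have ha0r : (1:ℝ) ≤ (a 0 : ℝ) := by exact_mod_cast ha0
  set A' : ℤ := 2*(a 0) - a 1 - a 2 with hA'_def
  set B' : ℤ := a 2 with hB'_def
  have hA'c : ((A' : ℤ) : ℝ) = 2*(a 0 : ℝ) - (a 1 : ℝ) - (a 2 : ℝ) := by
    rw [hA'_def]; push_cast; ring
  have hB'c : ((B' : ℤ) : ℝ) = (a 2 : ℝ) := by rw [hB'_def]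
  have har1 : (a 1 : ℝ) = 2*(a 0:ℝ) - (A':ℝ) - (B':ℝ) := by rw [hA'c, hB'c]; ring
  have har2 : (a 2 : ℝ) = (B':ℝ) := hB'c.symm
  -- CASE P
  have caseP : 0 ≤ A' → 0 ≤ B' → a = ![1,2,0] := by
    intro hA'n hB'n
    have hA'r : (0:ℝ) ≤ (A' : ℝ) := by exact_mod_cast hA'n
    have hB'r : (0:ℝ) ≤ (B' : ℝ) := by exact_mod_cast hB'n
    set d : ℝ := (a 0 : ℝ) + (A' : ℝ) + (B' : ℝ) with hd_def
    have hdpos : (0:ℝ) < d := by rw [hd_def]; linarith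
    set δ : ℝ := min t (1/(2*d)) with hδ_def
    have hδpos : 0 < δ := lt_min ht (by positivity)
    have hδt : δ ≤ t := min_le_left _ _
    have hδd : δ ≤ 1/(2*d) := min_le_right _ _
    have hδd' : 2*δ*d ≤ 1 := by
      have h2 : δ*(2*d) ≤ (1/(2*d))*(2*d) := mul_le_mul_of_nonneg_right hδd (by positivity)
      have h3 : (1/(2*d))*(2*d) = 1 := by field_simp
      calc 2*δ*d = δ*(2*d) := by ring
        _ ≤ (1/(2*d))*(2*d) := h2
        _ = 1 := h3
    set w1 : ℝ := 2*δ*(A' : ℝ) with hw1_def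
    set w2 : ℝ := 2*δ*(B' : ℝ) with hw2_def
    set w3 : ℝ := 2*δ*(a 0 : ℝ) with hw3_def
    have hw1n : 0 ≤ w1 := mul_nonneg (by linarith) hA'r
    have hw2n : 0 ≤ w2 := mul_nonneg (by linarith) hB'r
    have hw3p : 0 < w3 := mul_pos (by linarith) (by linarith)
    have hw12 : w1 + w2 ≤ 1 := by
      have h1 : w1 + w2 = 2*δ*((A':ℝ) + (B':ℝ)) := by rw [hw1_def, hw2_def]; ring
      rw [h1]
      nlinarith [mul_le_mul_of_nonneg_left
        (show (A':ℝ) + (B':ℝ) ≤ d from by rw [hd_def]; linarith)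
        (by linarith : (0:ℝ) ≤ 2*δ)]
    have hw3a : w3 ≤ 1 := by
      nlinarith [mul_le_mul_of_nonneg_left
        (show (a 0:ℝ) ≤ d from by rw [hd_def]; linarith)
        (by linarith : (0:ℝ) ≤ 2*δ)]
    set X : Fin 3 → ℝ :=
      (1 - w1 - w2) • v + w1 • ![(-1:ℝ),-1,-1] + w2 • ![(-1:ℝ),-1,0] + (0:ℝ) • v
      with hX_def
    set Y : Fin 3 → ℝ := (1 - w3) • v + w3 • ![(0:ℝ),2,-1] with hY_def
    have hXmem : X ∈ Δ :=
      comb4 hconv hm2 hm1' hm3' hm2 (by linarith) hw1n hw2n le_rfl (by ring)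
    have hYmem : Y ∈ Δ := hconv hm2 hT (by linarith) hw3p.le (by ring)
    have hmid : (1/2 : ℝ) • X + (1/2 : ℝ) • Y = v + δ • e := by
      funext j
      show (1/2)*X j + (1/2)*Y j = v j + δ * (a j : ℝ)
      fin_cases j
      · show (1/2)*((1-w1-w2)*v 0 + w1*(-1) + w2*(-1) + 0*v 0)
            + (1/2)*((1-w3)*v 0 + w3*0) = v 0 + δ*(a 0:ℝ)
        rw [hv0, hw1_def, hw2_def, hw3_def]; ring
      · show (1/2)*((1-w1-w2)*v 1 + w1*(-1) + w2*(-1) + 0*v 1)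
            + (1/2)*((1-w3)*v 1 + w3*2) = v 1 + δ*(a 1:ℝ)
        rw [hv1, hw1_def, hw2_def, hw3_def, har1]; ring
      · show (1/2)*((1-w1-w2)*v 2 + w1*(-1) + w2*0 + 0*v 2)
            + (1/2)*((1-w3)*v 2 + w3*(-1)) = v 2 + δ*(a 2:ℝ)
        rw [hv2, hw1_def, hw2_def, hw3_def, har2]; ring
    have hY0 : Y 0 = -1 + w3 := by
      show (1 - w3) * v 0 + w3 * 0 = _
      rw [hv0]; ring
    have hX0 : X 0 = -1 := by
      show (1 - w1 - w2) * v 0 + w1 * (-1) + w2 * (-1) + 0 * v 0 = -1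
      rw [hv0]; ring
    have hXY : X ≠ Y := by
      intro h
      have h2 := congrFun h 0
      rw [hX0, hY0] at h2
      linarith
    have hp : v + δ • e ∈ segment ℝ v (v + t • e) := mem_seg_mul ht hδpos.le hδt
    have happ := ext_both hS hXmem hYmem hp
      ⟨1/2, 1/2, by norm_num, by norm_num, by norm_num, hmid⟩
    obtain ⟨s, hs0, hst, hYeq⟩ := seg_param ht.le happ.2
    have hYe0 : Y 0 = v 0 + s * (a 0 : ℝ) := by rw [hYeq]; rfl
    have hYe1 : Y 1 = v 1 + s * (a 1 : ℝ) := by rw [hYeq]; rfl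
    have hYe2 : Y 2 = v 2 + s * (a 2 : ℝ) := by rw [hYeq]; rfl
    rw [hY0, hv0] at hYe0
    have hsδ : s = 2*δ := by
      have h1 : s * (a 0 : ℝ) = 2*δ*(a 0:ℝ) := by rw [hw3_def] at hYe0; linarith
      exact mul_right_cancel₀ (by linarith : (a 0:ℝ) ≠ 0) h1
    have hY2' : Y 2 = -1 := by
      show (1 - w3) * v 2 + w3 * (-1) = -1
      rw [hv2]; ring
    have ha2z : a 2 = 0 := by
      rw [hY2', hv2, hsδ] at hYe2
      have h1 : 2*δ*(a 2:ℝ) = 0 := by linarith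
      have h2 : (a 2 : ℝ) = 0 := by
        rcases mul_eq_zero.1 h1 with h | h
        · exfalso; linarith
        · exact h
      exact_mod_cast h2
    have hY1' : Y 1 = 2*w3 := by
      show (1 - w3) * v 1 + w3 * 2 = _
      rw [hv1]; ring
    have ha12 : a 1 = 2 * a 0 := by
      rw [hY1', hv1, hsδ, hw3_def] at hYe1
      have h1 : (a 1 : ℝ) = 2*(a 0:ℝ) := by
        have h2 : 2*δ*((a 1:ℝ) - 2*(a 0:ℝ)) = 0 := by linarith
        rcases mul_eq_zero.1 h2 with h | h
        · exfalso; linarith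
        · linarith
      exact_mod_cast h1
    have hunit : IsUnit (a 0) := by
      apply hprim.2
      intro i; fin_cases i
      · show a 0 ∣ a 0; exact dvd_rfl
      · show a 0 ∣ a 1; exact ⟨2, by omega⟩
      · show a 0 ∣ a 2; simp [ha2z]
    have ha01 : a 0 = 1 := by
      rcases Int.isUnit_iff.1 hunit with h' | h' <;> omega
    have ha1v : a 1 = 2 := by omega
    funext i; fin_cases i <;> simp [ha01, ha1v, ha2z]
  -- CASE N
  have caseN : A' ≤ 0 → B' ≤ 0 → ¬(A' = 0 ∧ B' = 0) → False := by
    intro hA'n hB'n hnb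
    obtain ⟨t3, ht3, hS3⟩ := hTedge
    have hA'r : (A' : ℝ) ≤ 0 := by exact_mod_cast hA'n
    have hB'r : (B' : ℝ) ≤ 0 := by exact_mod_cast hB'n
    have hABr : (A' : ℝ) + (B' : ℝ) ≤ -1 := by
      have h1 : A' + B' ≤ -1 := by omega
      calc (A':ℝ) + (B':ℝ) = ((A' + B' : ℤ) : ℝ) := by push_cast; ring
        _ ≤ ((-1 : ℤ) : ℝ) := by exact_mod_cast h1
        _ = -1 := by norm_num
    set d : ℝ := (a 0 : ℝ) - (A' : ℝ) - (B' : ℝ) with hd_def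
    have hdpos : (0:ℝ) < d := by rw [hd_def]; linarith
    set δ : ℝ := min (min t (t3/(a 0 : ℝ))) (1/(2*d)) with hδ_def
    have hδpos : 0 < δ :=
      lt_min (lt_min ht (by positivity)) (by positivity)
    have hδt : δ ≤ t := le_trans (min_le_left _ _) (min_le_left _ _)
    have hδt3 : δ * (a 0:ℝ) ≤ t3 := by
      have h1 : δ ≤ t3/(a 0:ℝ) := le_trans (min_le_left _ _) (min_le_right _ _)
      calc δ * (a 0:ℝ) ≤ (t3/(a 0:ℝ)) * (a 0:ℝ) :=
            mul_le_mul_of_nonneg_right h1 (by linarith)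
        _ = t3 := by field_simp
    have hδd : δ ≤ 1/(2*d) := min_le_right _ _
    have hδd' : 2*δ*d ≤ 1 := by
      have h2 : δ*(2*d) ≤ (1/(2*d))*(2*d) := mul_le_mul_of_nonneg_right hδd (by positivity)
      have h3 : (1/(2*d))*(2*d) = 1 := by field_simp
      calc 2*δ*d = δ*(2*d) := by ring
        _ ≤ (1/(2*d))*(2*d) := h2
        _ = 1 := h3
    set u1 : ℝ := δ*(-(A' : ℝ)) with hu1_def
    set u2 : ℝ := δ*(-(B' : ℝ)) with hu2_def
    set u3 : ℝ := δ*(a 0 : ℝ) with hu3_def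
    have hu1n : 0 ≤ u1 := mul_nonneg hδpos.le (by linarith)
    have hu2n : 0 ≤ u2 := mul_nonneg hδpos.le (by linarith)
    have hu3p : 0 < u3 := mul_pos hδpos (by linarith)
    have husum : u1 + u2 + u3 ≤ 1 := by
      have h1 : u1 + u2 + u3 = δ * d := by
        rw [hu1_def, hu2_def, hu3_def, hd_def]; ring
      rw [h1]; nlinarith
    set X : Fin 3 → ℝ := v + δ • e with hX_def
    have hXmem : X ∈ Δ := hS.1 (mem_seg_mul ht hδpos.le hδt)
    set Y : Fin 3 → ℝ :=
      (1 - u1 - u2 - u3) • v + u1 • ![(-1:ℝ),-1,-1] + u2 • ![(-1:ℝ),-1,0]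
        + u3 • ![(0:ℝ),2,-1] with hY_def
    have hYmem : Y ∈ Δ :=
      comb4 hconv hm2 hm1' hm3' hT (by linarith) hu1n hu2n hu3p.le (by ring)
    have hmid : (1/2 : ℝ) • X + (1/2 : ℝ) • Y = v + (δ*(a 0:ℝ)) • ![(1:ℝ),2,0] := by
      funext j
      show (1/2)*X j + (1/2)*Y j = v j + (δ*(a 0:ℝ)) * (![(1:ℝ),2,0]) j
      fin_cases j
      · show (1/2)*(v 0 + δ*(a 0:ℝ))
            + (1/2)*((1-u1-u2-u3)*v 0 + u1*(-1) + u2*(-1) + u3*0)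
            = v 0 + (δ*(a 0:ℝ))*1
        rw [hv0, hu1_def, hu2_def, hu3_def]; ring
      · show (1/2)*(v 1 + δ*(a 1:ℝ))
            + (1/2)*((1-u1-u2-u3)*v 1 + u1*(-1) + u2*(-1) + u3*2)
            = v 1 + (δ*(a 0:ℝ))*2
        rw [hv1, hu1_def, hu2_def, hu3_def, har1]; ring
      · show (1/2)*(v 2 + δ*(a 2:ℝ))
            + (1/2)*((1-u1-u2-u3)*v 2 + u1*(-1) + u2*0 + u3*(-1))
            = v 2 + (δ*(a 0:ℝ))*0
        rw [hv2, hu1_def, hu2_def, hu3_def, har2]; ring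
    have hXY : X ≠ Y := by
      intro h
      have h2c : v 2 + δ*(a 2:ℝ)
          = (1-u1-u2-u3)*v 2 + u1*(-1) + u2*0 + u3*(-1) := congrFun h 2
      rw [hv2, hu1_def, hu2_def, hu3_def, har2] at h2c
      have h5 : δ*(B':ℝ) = 0 := by linarith
      have hB0 : (B':ℝ) = 0 := by
        rcases mul_eq_zero.1 h5 with h' | h'
        · exact absurd h' hδpos.ne'
        · exact h'
      have h1c : v 1 + δ*(a 1:ℝ)
          = (1-u1-u2-u3)*v 1 + u1*(-1) + u2*(-1) + u3*2 := congrFun h 1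
      rw [hv1, hu1_def, hu2_def, hu3_def, har1] at h1c
      have h6 : δ*(A':ℝ) = 0 := by nlinarith [h1c, h5]
      have hA0 : (A':ℝ) = 0 := by
        rcases mul_eq_zero.1 h6 with h' | h'
        · exact absurd h' hδpos.ne'
        · exact h'
      exact hnb ⟨by exact_mod_cast hA0, by exact_mod_cast hB0⟩
    have hp : v + (δ*(a 0:ℝ)) • ![(1:ℝ),2,0] ∈ segment ℝ v (v + t3 • ![(1:ℝ),2,0]) :=
      mem_seg_mul ht3 (by positivity) hδt3
    have happ := ext_both hS3 hXmem hYmem hp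
      ⟨1/2, 1/2, by norm_num, by norm_num, by norm_num, hmid⟩
    obtain ⟨s, hs0, hst, hXeq⟩ := seg_param ht3.le happ.1
    have hXe0 : v 0 + δ * (a 0:ℝ) = v 0 + s * 1 := congrFun hXeq 0
    have hXe1 : v 1 + δ * (a 1:ℝ) = v 1 + s * 2 := congrFun hXeq 1
    have hXe2 : v 2 + δ * (a 2:ℝ) = v 2 + s * 0 := congrFun hXeq 2
    have hs_eq : s = δ*(a 0:ℝ) := by linarith
    have ha2z : (a 2:ℝ) = 0 := by
      have h1 : δ*(a 2:ℝ) = 0 := by linarith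
      rcases mul_eq_zero.1 h1 with h | h
      · exfalso; linarith
      · exact h
    have ha12 : (a 1:ℝ) = 2*(a 0:ℝ) := by
      rw [hs_eq] at hXe1
      have h1 : δ*((a 1:ℝ) - 2*(a 0:ℝ)) = 0 := by linarith
      rcases mul_eq_zero.1 h1 with h | h
      · exfalso; linarith
      · linarith
    have hB'z : B' = 0 := by
      have : (B':ℝ) = 0 := by rw [hB'c]; exact ha2z
      exact_mod_cast this
    have hA'z : A' = 0 := by
      have h1 : (A' : ℝ) = 0 := by rw [hA'c, ha12, ha2z]; ring
      exact_mod_cast h1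
    exact hnb ⟨hA'z, hB'z⟩
  -- CASE R1 : A' ≥ 1, B' ≤ -1
  have caseR1 : 1 ≤ A' → B' ≤ -1 → False := by
    intro h1 h2
    have hA'r : (1:ℝ) ≤ (A' : ℝ) := by exact_mod_cast h1
    have hB'r : (B' : ℝ) ≤ -1 := by exact_mod_cast h2
    set D : ℝ := (A':ℝ) + 3*(a 0:ℝ) - (B':ℝ) with hD_def
    have hDpos : (0:ℝ) < D := by rw [hD_def]; linarith
    set N : ℝ := (A':ℝ) + 3*(a 0:ℝ) with hN_def
    have hNpos : (0:ℝ) < N := by rw [hN_def]; linarith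
    have ha0ne : (a 0:ℝ) ≠ 0 := by linarith
    have hNne : N ≠ 0 := hNpos.ne'
    have hDne : D ≠ 0 := hDpos.ne'
    have hQmem : v + (1/(a 0:ℝ)) • e ∈ Δ := by
      apply hPmem
      · positivity
      · rw [div_le_one (by linarith)]; linarith
    set y : Fin 3 → ℝ :=
      ((a 0:ℝ)/N) • (v + (1/(a 0:ℝ)) • e) + ((a 0:ℝ)/N) • ![(0:ℝ),-1,-1]
        + (((A':ℝ) + (a 0:ℝ))/N) • ![(0:ℝ),2,-1] + (0:ℝ) • v with hy_def
    have hymem : y ∈ Δ := by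
      apply comb4 hconv hQmem hA hT hm2
      · positivity
      · positivity
      · apply div_nonneg (by linarith) hNpos.le
      · exact le_rfl
      · rw [hN_def]; field_simp; ring
    have hy0 : y 0 = 0 := by
      show (a 0:ℝ)/N * (v 0 + (1/(a 0:ℝ))*(a 0:ℝ)) + (a 0:ℝ)/N * 0
          + ((A':ℝ)+(a 0:ℝ))/N * 0 + 0 * v 0 = 0
      rw [hv0]
      field_simp; ring
    have hy1 : y 1 = D/N := by
      show (a 0:ℝ)/N * (v 1 + (1/(a 0:ℝ))*(a 1:ℝ)) + (a 0:ℝ)/N * (-1)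
          + ((A':ℝ)+(a 0:ℝ))/N * 2 + 0 * v 1 = D/N
      rw [hv1, har1, hD_def]
      field_simp
      ring
    have hy2 : y 2 = -(D/N) := by
      show (a 0:ℝ)/N * (v 2 + (1/(a 0:ℝ))*(a 2:ℝ)) + (a 0:ℝ)/N * (-1)
          + ((A':ℝ)+(a 0:ℝ))/N * (-1) + 0 * v 2 = -(D/N)
      rw [hv2, har2, hD_def]
      field_simp
      ring
    have hc0 : (0:ℝ) ≤ N/D := by positivity
    have hc1 : N/D < 1 := by
      rw [div_lt_one hDpos, hD_def, hN_def]; linarith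
    have hz : (![(0:ℝ),1,-1]) = (N/D) • y := by
      funext j
      show (![(0:ℝ),1,-1]) j = (N/D) * y j
      fin_cases j
      · show (0:ℝ) = (N/D) * y 0
        rw [hy0]; ring
      · show (1:ℝ) = (N/D) * y 1
        rw [hy1]; field_simp
      · show (-1:ℝ) = (N/D) * y 2
        rw [hy2]; field_simp
    have hzint : (![(0:ℝ),1,-1]) ∈ interior Δ := by
      rw [hz]; exact interior_scale hconv h0 hymem hc0 hc1
    have hzlat : IsLatticePt (![(0:ℝ),1,-1]) := by
      intro i; fin_cases i
      · exact ⟨0, by norm_num⟩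
      · exact ⟨1, by norm_num⟩
      · exact ⟨-1, by norm_num⟩
    have hcontra := huniq _ hzlat hzint
    have h3 : (1:ℝ) = 0 := congrFun hcontra 1
    norm_num at h3
  -- CASE R2 : A' ≤ -1, B' ≥ 1
  have caseR2 : A' ≤ -1 → 1 ≤ B' → False := by
    intro h1 h2
    have hA'r : (A' : ℝ) ≤ -1 := by exact_mod_cast h1
    have hB'r : (1:ℝ) ≤ (B' : ℝ) := by exact_mod_cast h2
    set D : ℝ := 3*(a 0:ℝ) - (A':ℝ) + (B':ℝ) with hD_def
    have hDpos : (0:ℝ) < D := by rw [hD_def]; linarith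
    set N : ℝ := 3*(a 0:ℝ) + (B':ℝ) with hN_def
    have hNpos : (0:ℝ) < N := by rw [hN_def]; linarith
    have ha0ne : (a 0:ℝ) ≠ 0 := by linarith
    have hNne : N ≠ 0 := hNpos.ne'
    have hDne : D ≠ 0 := hDpos.ne'
    have hQmem : v + (1/(a 0:ℝ)) • e ∈ Δ := by
      apply hPmem
      · positivity
      · rw [div_le_one (by linarith)]; linarith
    set y : Fin 3 → ℝ :=
      ((a 0:ℝ)/N) • (v + (1/(a 0:ℝ)) • e) + ((a 0:ℝ)/N) • ![(0:ℝ),-1,2]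
        + (((B':ℝ) + (a 0:ℝ))/N) • ![(0:ℝ),2,-1] + (0:ℝ) • v with hy_def
    have hymem : y ∈ Δ := by
      apply comb4 hconv hQmem hB hT hm2
      · positivity
      · positivity
      · apply div_nonneg (by linarith) hNpos.le
      · exact le_rfl
      · rw [hN_def]; field_simp; ring
    have hy0 : y 0 = 0 := by
      show (a 0:ℝ)/N * (v 0 + (1/(a 0:ℝ))*(a 0:ℝ)) + (a 0:ℝ)/N * 0
          + ((B':ℝ)+(a 0:ℝ))/N * 0 + 0 * v 0 = 0
      rw [hv0]
      field_simp; ring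
    have hy1 : y 1 = D/N := by
      show (a 0:ℝ)/N * (v 1 + (1/(a 0:ℝ))*(a 1:ℝ)) + (a 0:ℝ)/N * (-1)
          + ((B':ℝ)+(a 0:ℝ))/N * 2 + 0 * v 1 = D/N
      rw [hv1, har1, hD_def]
      field_simp
      ring
    have hy2 : y 2 = 0 := by
      show (a 0:ℝ)/N * (v 2 + (1/(a 0:ℝ))*(a 2:ℝ)) + (a 0:ℝ)/N * 2
          + ((B':ℝ)+(a 0:ℝ))/N * (-1) + 0 * v 2 = 0
      rw [hv2, har2]
      field_simp
      ring
    have hc0 : (0:ℝ) ≤ N/D := by positivity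
    have hc1 : N/D < 1 := by
      rw [div_lt_one hDpos, hD_def, hN_def]; linarith
    have hz : (![(0:ℝ),1,0]) = (N/D) • y := by
      funext j
      show (![(0:ℝ),1,0]) j = (N/D) * y j
      fin_cases j
      · show (0:ℝ) = (N/D) * y 0
        rw [hy0]; ring
      · show (1:ℝ) = (N/D) * y 1
        rw [hy1]; field_simp
      · show (0:ℝ) = (N/D) * y 2
        rw [hy2]; ring
    have hzint : (![(0:ℝ),1,0]) ∈ interior Δ := by
      rw [hz]; exact interior_scale hconv h0 hymem hc0 hc1
    have hzlat : IsLatticePt (![(0:ℝ),1,0]) := by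
      intro i; fin_cases i
      · exact ⟨0, by norm_num⟩
      · exact ⟨1, by norm_num⟩
      · exact ⟨0, by norm_num⟩
    have hcontra := huniq _ hzlat hzint
    have h3 : (1:ℝ) = 0 := congrFun hcontra 1
    norm_num at h3
  -- combine
  by_cases hc1 : 0 ≤ A' ∧ 0 ≤ B'
  · exact caseP hc1.1 hc1.2
  · by_cases hc2 : A' ≤ 0 ∧ B' ≤ 0
    · exact absurd (caseN hc2.1 hc2.2 (by omega)) not_false
    · have hsplit : (1 ≤ A' ∧ B' ≤ -1) ∨ (A' ≤ -1 ∧ 1 ≤ B') := by omega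
      rcases hsplit with ⟨h1, h2⟩ | ⟨h1, h2⟩
      · exact absurd (caseR1 h1 h2) not_false
      · exact absurd (caseR2 h1 h2) not_false

set_option maxHeartbeats 1000000 in
lemma uniq_v3 {Δ : Set (Fin 3 → ℝ)} (hconv : Convex ℝ Δ)
    (hm1 : ![(-1:ℝ),-1,-1] ∈ Δ) (hm2 : ![(-1:ℝ),0,-1] ∈ Δ) (hm3 : ![(-1:ℝ),-1,0] ∈ Δ)
    (hhalf : ∀ x ∈ Δ, -1 ≤ x 0)
    (h0 : (0 : Fin 3 → ℝ) ∈ interior Δ)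
    (huniq : ∀ w, IsLatticePt w → w ∈ interior Δ → w = 0)
    (hT : ![(0:ℝ),2,-1] ∈ Δ) (hA : ![(0:ℝ),-1,-1] ∈ Δ) (hB : ![(0:ℝ),-1,2] ∈ Δ)
    (hTedge : IsEdgeDir Δ ![(-1:ℝ),-1,0] ![(1:ℝ),0,2])
    {a : Fin 3 → ℤ} (hprim : IsPrimitiveZ a)
    (hedge : IsEdgeDir Δ ![(-1:ℝ),-1,0] (fun i => (a i : ℝ)))
    (hPmem : ∀ s : ℝ, 0 ≤ s → s ≤ 1 →
      ![(-1:ℝ),-1,0] + s • (fun i => (a i : ℝ)) ∈ Δ)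
    (h00 : a 0 ≠ 0) : a = ![1,0,2] := by
  obtain ⟨t, ht, hS⟩ := hedge
  set e : Fin 3 → ℝ := fun i => (a i : ℝ) with he_def
  set v : Fin 3 → ℝ := ![(-1:ℝ),-1,0] with hv_def
  have hm1' : ![(-1:ℝ),-1,-1] ∈ Δ := hm1
  have hm2' : ![(-1:ℝ),0,-1] ∈ Δ := hm2
  have hv0 : v 0 = -1 := rfl
  have hv1 : v 1 = -1 := rfl
  have hv2 : v 2 = 0 := rfl
  have ha0 : 1 ≤ a 0 := by
    have hpt : v + t • e ∈ Δ := hS.1 (right_mem_segment ℝ _ _)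
    have h1 : -1 ≤ v 0 + t * (a 0 : ℝ) := hhalf _ hpt
    rw [hv0] at h1
    have h2 : 0 ≤ a 0 := by
      by_contra hcon
      push_neg at hcon
      have h3 : (a 0 : ℝ) < 0 := by exact_mod_cast hcon
      nlinarith
    omega
  have ha0r : (1:ℝ) ≤ (a 0 : ℝ) := by exact_mod_cast ha0
  set A' : ℤ := 2*(a 0) - a 1 - a 2 with hA'_def
  set B' : ℤ := a 1 with hB'_def
  have hA'c : ((A' : ℤ) : ℝ) = 2*(a 0 : ℝ) - (a 1 : ℝ) - (a 2 : ℝ) := by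
    rw [hA'_def]; push_cast; ring
  have hB'c : ((B' : ℤ) : ℝ) = (a 1 : ℝ) := by rw [hB'_def]
  have hara : (a 2 : ℝ) = 2*(a 0:ℝ) - (A':ℝ) - (B':ℝ) := by rw [hA'c, hB'c]; ring
  have harb : (a 1 : ℝ) = (B':ℝ) := hB'c.symm
  -- CASE P
  have caseP : 0 ≤ A' → 0 ≤ B' → a = ![1,0,2] := by
    intro hA'n hB'n
    have hA'r : (0:ℝ) ≤ (A' : ℝ) := by exact_mod_cast hA'n
    have hB'r : (0:ℝ) ≤ (B' : ℝ) := by exact_mod_cast hB'n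
    set d : ℝ := (a 0 : ℝ) + (A' : ℝ) + (B' : ℝ) with hd_def
    have hdpos : (0:ℝ) < d := by rw [hd_def]; linarith
    set δ : ℝ := min t (1/(2*d)) with hδ_def
    have hδpos : 0 < δ := lt_min ht (by positivity)
    have hδt : δ ≤ t := min_le_left _ _
    have hδd : δ ≤ 1/(2*d) := min_le_right _ _
    have hδd' : 2*δ*d ≤ 1 := by
      have h2 : δ*(2*d) ≤ (1/(2*d))*(2*d) := mul_le_mul_of_nonneg_right hδd (by positivity)
      have h3 : (1/(2*d))*(2*d) = 1 := by field_simp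
      calc 2*δ*d = δ*(2*d) := by ring
        _ ≤ (1/(2*d))*(2*d) := h2
        _ = 1 := h3
    set w1 : ℝ := 2*δ*(A' : ℝ) with hw1_def
    set w2 : ℝ := 2*δ*(B' : ℝ) with hw2_def
    set w3 : ℝ := 2*δ*(a 0 : ℝ) with hw3_def
    have hw1n : 0 ≤ w1 := mul_nonneg (by linarith) hA'r
    have hw2n : 0 ≤ w2 := mul_nonneg (by linarith) hB'r
    have hw3p : 0 < w3 := mul_pos (by linarith) (by linarith)
    have hw12 : w1 + w2 ≤ 1 := by
      have h1 : w1 + w2 = 2*δ*((A':ℝ) + (B':ℝ)) := by rw [hw1_def, hw2_def]; ring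
      rw [h1]
      nlinarith [mul_le_mul_of_nonneg_left
        (show (A':ℝ) + (B':ℝ) ≤ d from by rw [hd_def]; linarith)
        (by linarith : (0:ℝ) ≤ 2*δ)]
    have hw3a : w3 ≤ 1 := by
      nlinarith [mul_le_mul_of_nonneg_left
        (show (a 0:ℝ) ≤ d from by rw [hd_def]; linarith)
        (by linarith : (0:ℝ) ≤ 2*δ)]
    set X : Fin 3 → ℝ :=
      (1 - w1 - w2) • v + w1 • ![(-1:ℝ),-1,-1] + w2 • ![(-1:ℝ),0,-1] + (0:ℝ) • v
      with hX_def
    set Y : Fin 3 → ℝ := (1 - w3) • v + w3 • ![(0:ℝ),-1,2] with hY_def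
    have hXmem : X ∈ Δ :=
      comb4 hconv hm3 hm1' hm2' hm3 (by linarith) hw1n hw2n le_rfl (by ring)
    have hYmem : Y ∈ Δ := hconv hm3 hB (by linarith) hw3p.le (by ring)
    have hmid : (1/2 : ℝ) • X + (1/2 : ℝ) • Y = v + δ • e := by
      funext j
      show (1/2)*X j + (1/2)*Y j = v j + δ * (a j : ℝ)
      fin_cases j
      · show (1/2)*((1-w1-w2)*v 0 + w1*(-1) + w2*(-1) + 0*v 0)
            + (1/2)*((1-w3)*v 0 + w3*0) = v 0 + δ*(a 0:ℝ)
        rw [hv0, hw1_def, hw2_def, hw3_def]; ring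
      · show (1/2)*((1-w1-w2)*v 1 + w1*(-1) + w2*0 + 0*v 1)
            + (1/2)*((1-w3)*v 1 + w3*(-1)) = v 1 + δ*(a 1:ℝ)
        rw [hv1, hw1_def, hw2_def, hw3_def, harb]; ring
      · show (1/2)*((1-w1-w2)*v 2 + w1*(-1) + w2*(-1) + 0*v 2)
            + (1/2)*((1-w3)*v 2 + w3*2) = v 2 + δ*(a 2:ℝ)
        rw [hv2, hw1_def, hw2_def, hw3_def, hara]; ring
    have hY0 : Y 0 = -1 + w3 := by
      show (1 - w3) * v 0 + w3 * 0 = _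
      rw [hv0]; ring
    have hX0 : X 0 = -1 := by
      show (1 - w1 - w2) * v 0 + w1 * (-1) + w2 * (-1) + 0 * v 0 = -1
      rw [hv0]; ring
    have hXY : X ≠ Y := by
      intro h
      have h2 := congrFun h 0
      rw [hX0, hY0] at h2
      linarith
    have hp : v + δ • e ∈ segment ℝ v (v + t • e) := mem_seg_mul ht hδpos.le hδt
    have happ := ext_both hS hXmem hYmem hp
      ⟨1/2, 1/2, by norm_num, by norm_num, by norm_num, hmid⟩
    obtain ⟨s, hs0, hst, hYeq⟩ := seg_param ht.le happ.2
    have hYe0 : Y 0 = v 0 + s * (a 0 : ℝ) := by rw [hYeq]; rfl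
    have hYe1 : Y 1 = v 1 + s * (a 1 : ℝ) := by rw [hYeq]; rfl
    have hYe2 : Y 2 = v 2 + s * (a 2 : ℝ) := by rw [hYeq]; rfl
    rw [hY0, hv0] at hYe0
    have hsδ : s = 2*δ := by
      have h1 : s * (a 0 : ℝ) = 2*δ*(a 0:ℝ) := by rw [hw3_def] at hYe0; linarith
      exact mul_right_cancel₀ (by linarith : (a 0:ℝ) ≠ 0) h1
    have hY1' : Y 1 = -1 := by
      show (1 - w3) * v 1 + w3 * (-1) = -1
      rw [hv1]; ring
    have ha1z : a 1 = 0 := by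
      rw [hY1', hv1, hsδ] at hYe1
      have h1 : 2*δ*(a 1:ℝ) = 0 := by linarith
      have h2 : (a 1 : ℝ) = 0 := by
        rcases mul_eq_zero.1 h1 with h | h
        · exfalso; linarith
        · exact h
      exact_mod_cast h2
    have hY2' : Y 2 = 2*w3 := by
      show (1 - w3) * v 2 + w3 * 2 = _
      rw [hv2]; ring
    have ha22 : a 2 = 2 * a 0 := by
      rw [hY2', hv2, hsδ, hw3_def] at hYe2
      have h1 : (a 2 : ℝ) = 2*(a 0:ℝ) := by
        have h2 : 2*δ*((a 2:ℝ) - 2*(a 0:ℝ)) = 0 := by linarith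
        rcases mul_eq_zero.1 h2 with h | h
        · exfalso; linarith
        · linarith
      exact_mod_cast h1
    have hunit : IsUnit (a 0) := by
      apply hprim.2
      intro i; fin_cases i
      · show a 0 ∣ a 0; exact dvd_rfl
      · show a 0 ∣ a 1; simp [ha1z]
      · show a 0 ∣ a 2; exact ⟨2, by omega⟩
    have ha01 : a 0 = 1 := by
      rcases Int.isUnit_iff.1 hunit with h' | h' <;> omega
    have ha2v : a 2 = 2 := by omega
    funext i; fin_cases i <;> simp [ha01, ha2v, ha1z]
  -- CASE N
  have caseN : A' ≤ 0 → B' ≤ 0 → ¬(A' = 0 ∧ B' = 0) → False := by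
    intro hA'n hB'n hnb
    obtain ⟨t3, ht3, hS3⟩ := hTedge
    have hA'r : (A' : ℝ) ≤ 0 := by exact_mod_cast hA'n
    have hB'r : (B' : ℝ) ≤ 0 := by exact_mod_cast hB'n
    have hABr : (A' : ℝ) + (B' : ℝ) ≤ -1 := by
      have h1 : A' + B' ≤ -1 := by omega
      calc (A':ℝ) + (B':ℝ) = ((A' + B' : ℤ) : ℝ) := by push_cast; ring
        _ ≤ ((-1 : ℤ) : ℝ) := by exact_mod_cast h1
        _ = -1 := by norm_num
    set d : ℝ := (a 0 : ℝ) - (A' : ℝ) - (B' : ℝ) with hd_def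
    have hdpos : (0:ℝ) < d := by rw [hd_def]; linarith
    set δ : ℝ := min (min t (t3/(a 0 : ℝ))) (1/(2*d)) with hδ_def
    have hδpos : 0 < δ :=
      lt_min (lt_min ht (by positivity)) (by positivity)
    have hδt : δ ≤ t := le_trans (min_le_left _ _) (min_le_left _ _)
    have hδt3 : δ * (a 0:ℝ) ≤ t3 := by
      have h1 : δ ≤ t3/(a 0:ℝ) := le_trans (min_le_left _ _) (min_le_right _ _)
      calc δ * (a 0:ℝ) ≤ (t3/(a 0:ℝ)) * (a 0:ℝ) :=
            mul_le_mul_of_nonneg_right h1 (by linarith)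
        _ = t3 := by field_simp
    have hδd : δ ≤ 1/(2*d) := min_le_right _ _
    have hδd' : 2*δ*d ≤ 1 := by
      have h2 : δ*(2*d) ≤ (1/(2*d))*(2*d) := mul_le_mul_of_nonneg_right hδd (by positivity)
      have h3 : (1/(2*d))*(2*d) = 1 := by field_simp
      calc 2*δ*d = δ*(2*d) := by ring
        _ ≤ (1/(2*d))*(2*d) := h2
        _ = 1 := h3
    set u1 : ℝ := δ*(-(A' : ℝ)) with hu1_def
    set u2 : ℝ := δ*(-(B' : ℝ)) with hu2_def
    set u3 : ℝ := δ*(a 0 : ℝ) with hu3_def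
    have hu1n : 0 ≤ u1 := mul_nonneg hδpos.le (by linarith)
    have hu2n : 0 ≤ u2 := mul_nonneg hδpos.le (by linarith)
    have hu3p : 0 < u3 := mul_pos hδpos (by linarith)
    have husum : u1 + u2 + u3 ≤ 1 := by
      have h1 : u1 + u2 + u3 = δ * d := by
        rw [hu1_def, hu2_def, hu3_def, hd_def]; ring
      rw [h1]; nlinarith
    set X : Fin 3 → ℝ := v + δ • e with hX_def
    have hXmem : X ∈ Δ := hS.1 (mem_seg_mul ht hδpos.le hδt)
    set Y : Fin 3 → ℝ :=
      (1 - u1 - u2 - u3) • v + u1 • ![(-1:ℝ),-1,-1] + u2 • ![(-1:ℝ),0,-1]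
        + u3 • ![(0:ℝ),-1,2] with hY_def
    have hYmem : Y ∈ Δ :=
      comb4 hconv hm3 hm1' hm2' hB (by linarith) hu1n hu2n hu3p.le (by ring)
    have hmid : (1/2 : ℝ) • X + (1/2 : ℝ) • Y = v + (δ*(a 0:ℝ)) • ![(1:ℝ),0,2] := by
      funext j
      show (1/2)*X j + (1/2)*Y j = v j + (δ*(a 0:ℝ)) * (![(1:ℝ),0,2]) j
      fin_cases j
      · show (1/2)*(v 0 + δ*(a 0:ℝ))
            + (1/2)*((1-u1-u2-u3)*v 0 + u1*(-1) + u2*(-1) + u3*0)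
            = v 0 + (δ*(a 0:ℝ))*1
        rw [hv0, hu1_def, hu2_def, hu3_def]; ring
      · show (1/2)*(v 1 + δ*(a 1:ℝ))
            + (1/2)*((1-u1-u2-u3)*v 1 + u1*(-1) + u2*0 + u3*(-1))
            = v 1 + (δ*(a 0:ℝ))*0
        rw [hv1, hu1_def, hu2_def, hu3_def, harb]; ring
      · show (1/2)*(v 2 + δ*(a 2:ℝ))
            + (1/2)*((1-u1-u2-u3)*v 2 + u1*(-1) + u2*(-1) + u3*2)
            = v 2 + (δ*(a 0:ℝ))*2
        rw [hv2, hu1_def, hu2_def, hu3_def, hara]; ring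
    have hXY : X ≠ Y := by
      intro h
      have h2c : v 1 + δ*(a 1:ℝ)
          = (1-u1-u2-u3)*v 1 + u1*(-1) + u2*0 + u3*(-1) := congrFun h 1
      rw [hv1, hu1_def, hu2_def, hu3_def, harb] at h2c
      have h5 : δ*(B':ℝ) = 0 := by linarith
      have hB0 : (B':ℝ) = 0 := by
        rcases mul_eq_zero.1 h5 with h' | h'
        · exact absurd h' hδpos.ne'
        · exact h'
      have h1c : v 2 + δ*(a 2:ℝ)
          = (1-u1-u2-u3)*v 2 + u1*(-1) + u2*(-1) + u3*2 := congrFun h 2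
      rw [hv2, hu1_def, hu2_def, hu3_def, hara] at h1c
      have h6 : δ*(A':ℝ) = 0 := by nlinarith [h1c, h5]
      have hA0 : (A':ℝ) = 0 := by
        rcases mul_eq_zero.1 h6 with h' | h'
        · exact absurd h' hδpos.ne'
        · exact h'
      exact hnb ⟨by exact_mod_cast hA0, by exact_mod_cast hB0⟩
    have hp : v + (δ*(a 0:ℝ)) • ![(1:ℝ),0,2] ∈ segment ℝ v (v + t3 • ![(1:ℝ),0,2]) :=
      mem_seg_mul ht3 (by positivity) hδt3
    have happ := ext_both hS3 hXmem hYmem hp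
      ⟨1/2, 1/2, by norm_num, by norm_num, by norm_num, hmid⟩
    obtain ⟨s, hs0, hst, hXeq⟩ := seg_param ht3.le happ.1
    have hXe0 : v 0 + δ * (a 0:ℝ) = v 0 + s * 1 := congrFun hXeq 0
    have hXe1 : v 1 + δ * (a 1:ℝ) = v 1 + s * 0 := congrFun hXeq 1
    have hXe2 : v 2 + δ * (a 2:ℝ) = v 2 + s * 2 := congrFun hXeq 2
    have hs_eq : s = δ*(a 0:ℝ) := by linarith
    have ha1z : (a 1:ℝ) = 0 := by
      have h1 : δ*(a 1:ℝ) = 0 := by linarith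
      rcases mul_eq_zero.1 h1 with h | h
      · exfalso; linarith
      · exact h
    have ha22 : (a 2:ℝ) = 2*(a 0:ℝ) := by
      rw [hs_eq] at hXe2
      have h1 : δ*((a 2:ℝ) - 2*(a 0:ℝ)) = 0 := by linarith
      rcases mul_eq_zero.1 h1 with h | h
      · exfalso; linarith
      · linarith
    have hB'z : B' = 0 := by
      have : (B':ℝ) = 0 := by rw [hB'c]; exact ha1z
      exact_mod_cast this
    have hA'z : A' = 0 := by
      have h1 : (A' : ℝ) = 0 := by rw [hA'c, ha22, ha1z]; ring
      exact_mod_cast h1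
    exact hnb ⟨hA'z, hB'z⟩
  -- CASE R1 : A' ≥ 1, B' ≤ -1
  have caseR1 : 1 ≤ A' → B' ≤ -1 → False := by
    intro h1 h2
    have hA'r : (1:ℝ) ≤ (A' : ℝ) := by exact_mod_cast h1
    have hB'r : (B' : ℝ) ≤ -1 := by exact_mod_cast h2
    set D : ℝ := (A':ℝ) + 3*(a 0:ℝ) - (B':ℝ) with hD_def
    have hDpos : (0:ℝ) < D := by rw [hD_def]; linarith
    set N : ℝ := (A':ℝ) + 3*(a 0:ℝ) with hN_def
    have hNpos : (0:ℝ) < N := by rw [hN_def]; linarith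
    have ha0ne : (a 0:ℝ) ≠ 0 := by linarith
    have hNne : N ≠ 0 := hNpos.ne'
    have hDne : D ≠ 0 := hDpos.ne'
    have hQmem : v + (1/(a 0:ℝ)) • e ∈ Δ := by
      apply hPmem
      · positivity
      · rw [div_le_one (by linarith)]; linarith
    set y : Fin 3 → ℝ :=
      ((a 0:ℝ)/N) • (v + (1/(a 0:ℝ)) • e) + ((a 0:ℝ)/N) • ![(0:ℝ),-1,-1]
        + (((A':ℝ) + (a 0:ℝ))/N) • ![(0:ℝ),-1,2] + (0:ℝ) • v with hy_def
    have hymem : y ∈ Δ := by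
      apply comb4 hconv hQmem hA hB hm3
      · positivity
      · positivity
      · apply div_nonneg (by linarith) hNpos.le
      · exact le_rfl
      · rw [hN_def]; field_simp; ring
    have hy0 : y 0 = 0 := by
      show (a 0:ℝ)/N * (v 0 + (1/(a 0:ℝ))*(a 0:ℝ)) + (a 0:ℝ)/N * 0
          + ((A':ℝ)+(a 0:ℝ))/N * 0 + 0 * v 0 = 0
      rw [hv0]
      field_simp; ring
    have hy1 : y 1 = -(D/N) := by
      show (a 0:ℝ)/N * (v 1 + (1/(a 0:ℝ))*(a 1:ℝ)) + (a 0:ℝ)/N * (-1)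
          + ((A':ℝ)+(a 0:ℝ))/N * (-1) + 0 * v 1 = -(D/N)
      rw [hv1, harb, hD_def]
      field_simp
      ring
    have hy2 : y 2 = D/N := by
      show (a 0:ℝ)/N * (v 2 + (1/(a 0:ℝ))*(a 2:ℝ)) + (a 0:ℝ)/N * (-1)
          + ((A':ℝ)+(a 0:ℝ))/N * 2 + 0 * v 2 = D/N
      rw [hv2, hara, hD_def]
      field_simp
      ring
    have hc0 : (0:ℝ) ≤ N/D := by positivity
    have hc1 : N/D < 1 := by
      rw [div_lt_one hDpos, hD_def, hN_def]; linarith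
    have hz : (![(0:ℝ),-1,1]) = (N/D) • y := by
      funext j
      show (![(0:ℝ),-1,1]) j = (N/D) * y j
      fin_cases j
      · show (0:ℝ) = (N/D) * y 0
        rw [hy0]; ring
      · show (-1:ℝ) = (N/D) * y 1
        rw [hy1]; field_simp
      · show (1:ℝ) = (N/D) * y 2
        rw [hy2]; field_simp
    have hzint : (![(0:ℝ),-1,1]) ∈ interior Δ := by
      rw [hz]; exact interior_scale hconv h0 hymem hc0 hc1
    have hzlat : IsLatticePt (![(0:ℝ),-1,1]) := by
      intro i; fin_cases i
      · exact ⟨0, by norm_num⟩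
      · exact ⟨-1, by norm_num⟩
      · exact ⟨1, by norm_num⟩
    have hcontra := huniq _ hzlat hzint
    have h3 : (1:ℝ) = 0 := congrFun hcontra 2
    norm_num at h3
  -- CASE R2 : A' ≤ -1, B' ≥ 1
  have caseR2 : A' ≤ -1 → 1 ≤ B' → False := by
    intro h1 h2
    have hA'r : (A' : ℝ) ≤ -1 := by exact_mod_cast h1
    have hB'r : (1:ℝ) ≤ (B' : ℝ) := by exact_mod_cast h2
    set D : ℝ := 3*(a 0:ℝ) - (A':ℝ) + (B':ℝ) with hD_def
    have hDpos : (0:ℝ) < D := by rw [hD_def]; linarith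
    set N : ℝ := 3*(a 0:ℝ) + (B':ℝ) with hN_def
    have hNpos : (0:ℝ) < N := by rw [hN_def]; linarith
    have ha0ne : (a 0:ℝ) ≠ 0 := by linarith
    have hNne : N ≠ 0 := hNpos.ne'
    have hDne : D ≠ 0 := hDpos.ne'
    have hQmem : v + (1/(a 0:ℝ)) • e ∈ Δ := by
      apply hPmem
      · positivity
      · rw [div_le_one (by linarith)]; linarith
    set y : Fin 3 → ℝ :=
      ((a 0:ℝ)/N) • (v + (1/(a 0:ℝ)) • e) + ((a 0:ℝ)/N) • ![(0:ℝ),2,-1]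
        + (((B':ℝ) + (a 0:ℝ))/N) • ![(0:ℝ),-1,2] + (0:ℝ) • v with hy_def
    have hymem : y ∈ Δ := by
      apply comb4 hconv hQmem hT hB hm3
      · positivity
      · positivity
      · apply div_nonneg (by linarith) hNpos.le
      · exact le_rfl
      · rw [hN_def]; field_simp; ring
    have hy0 : y 0 = 0 := by
      show (a 0:ℝ)/N * (v 0 + (1/(a 0:ℝ))*(a 0:ℝ)) + (a 0:ℝ)/N * 0
          + ((B':ℝ)+(a 0:ℝ))/N * 0 + 0 * v 0 = 0
      rw [hv0]
      field_simp; ring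
    have hy1 : y 1 = 0 := by
      show (a 0:ℝ)/N * (v 1 + (1/(a 0:ℝ))*(a 1:ℝ)) + (a 0:ℝ)/N * 2
          + ((B':ℝ)+(a 0:ℝ))/N * (-1) + 0 * v 1 = 0
      rw [hv1, harb]
      field_simp
      ring
    have hy2 : y 2 = D/N := by
      show (a 0:ℝ)/N * (v 2 + (1/(a 0:ℝ))*(a 2:ℝ)) + (a 0:ℝ)/N * (-1)
          + ((B':ℝ)+(a 0:ℝ))/N * 2 + 0 * v 2 = D/N
      rw [hv2, hara, hD_def]
      field_simp
      ring
    have hc0 : (0:ℝ) ≤ N/D := by positivity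
    have hc1 : N/D < 1 := by
      rw [div_lt_one hDpos, hD_def, hN_def]; linarith
    have hz : (![(0:ℝ),0,1]) = (N/D) • y := by
      funext j
      show (![(0:ℝ),0,1]) j = (N/D) * y j
      fin_cases j
      · show (0:ℝ) = (N/D) * y 0
        rw [hy0]; ring
      · show (0:ℝ) = (N/D) * y 1
        rw [hy1]; ring
      · show (1:ℝ) = (N/D) * y 2
        rw [hy2]; field_simp
    have hzint : (![(0:ℝ),0,1]) ∈ interior Δ := by
      rw [hz]; exact interior_scale hconv h0 hymem hc0 hc1
    have hzlat : IsLatticePt (![(0:ℝ),0,1]) := by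
      intro i; fin_cases i
      · exact ⟨0, by norm_num⟩
      · exact ⟨0, by norm_num⟩
      · exact ⟨1, by norm_num⟩
    have hcontra := huniq _ hzlat hzint
    have h3 : (1:ℝ) = 0 := congrFun hcontra 2
    norm_num at h3
  -- combine
  by_cases hc1 : 0 ≤ A' ∧ 0 ≤ B'
  · exact caseP hc1.1 hc1.2
  · by_cases hc2 : A' ≤ 0 ∧ B' ≤ 0
    · exact absurd (caseN hc2.1 hc2.2 (by omega)) not_false
    · have hsplit : (1 ≤ A' ∧ B' ≤ -1) ∨ (A' ≤ -1 ∧ 1 ≤ B') := by omega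
      rcases hsplit with ⟨h1, h2⟩ | ⟨h1, h2⟩
      · exact absurd (caseR1 h1 h2) not_false
      · exact absurd (caseR2 h1 h2) not_false

/-- if a 3-dimensional monotone polytope has a small facet
`F = Δ ∩ {x₀ = -1}` with vertices `(-1,-1,-1)`, `(-1,0,-1)`, `(-1,-1,0)`, then the
primitive edge vector transverse to `F` at `(-1,0,-1)` is `(1,2,0)` and at
`(-1,-1,0)` it is `(1,0,2)`; hence `Δ` contains `(0,-1,-1)`, `(0,2,-1)`, `(0,-1,2)`. -/
theorem small_facet_edges
    (V : Finset (Fin 3 → ℝ)) (hVlat : ∀ v ∈ V, IsLatticePt v)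
    (Δ : Set (Fin 3 → ℝ)) (hΔ : Δ = convexHull ℝ (V : Set (Fin 3 → ℝ)))
    (h0 : (0 : Fin 3 → ℝ) ∈ interior Δ)
    (huniq : ∀ w, IsLatticePt w → w ∈ interior Δ → w = 0)
    (hfano : ∀ v, IsVertex Δ v → VertexFanoSmoothAt Δ 0 v)
    -- the small facet and its vertices
    (hv1 : IsVertex Δ ![-1, -1, -1]) (hv2 : IsVertex Δ ![-1, 0, -1])
    (hv3 : IsVertex Δ ![-1, -1, 0])
    (hhalf : ∀ x ∈ Δ, -1 ≤ x 0)
    (hF : Δ ∩ {x | x 0 = -1} =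
      convexHull ℝ {![-1, -1, -1], ![-1, 0, -1], ![-1, -1, 0]}) :
    (∀ e : Fin 3 → ℝ, IsPrimIntVec e → IsEdgeDir Δ ![-1, 0, -1] e → e 0 ≠ 0 →
      e = ![1, 2, 0]) ∧
    (∀ e : Fin 3 → ℝ, IsPrimIntVec e → IsEdgeDir Δ ![-1, -1, 0] e → e 0 ≠ 0 →
      e = ![1, 0, 2]) ∧
    ![(0 : ℝ), -1, -1] ∈ Δ ∧ ![(0 : ℝ), 2, -1] ∈ Δ ∧ ![(0 : ℝ), -1, 2] ∈ Δ := by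
  have hconv : Convex ℝ Δ := hΔ ▸ convex_convexHull ℝ _
  have hmm1 : ![(-1:ℝ),-1,-1] ∈ Δ := hv1.1
  have hmm2 : ![(-1:ℝ),0,-1] ∈ Δ := hv2.1
  have hmm3 : ![(-1:ℝ),-1,0] ∈ Δ := hv3.1
  -- the facet region
  have hFsub : ∀ x ∈ Δ, x 0 = -1 → (-1 ≤ x 1 ∧ -1 ≤ x 2 ∧ x 1 + x 2 ≤ -1) := by
    intro x hx hx0
    have hmem : x ∈ convexHull ℝ {![(-1:ℝ), -1, -1], ![-1, 0, -1], ![-1, -1, 0]} := by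
      rw [← hF]; exact ⟨hx, hx0⟩
    have hRconv : Convex ℝ {x : Fin 3 → ℝ | -1 ≤ x 1 ∧ -1 ≤ x 2 ∧ x 1 + x 2 ≤ -1} := by
      intro p hp q hq α β hα hβ hαβ
      have e1 : (α • p + β • q) 1 = α * p 1 + β * q 1 := rfl
      have e2 : (α • p + β • q) 2 = α * p 2 + β * q 2 := rfl
      refine ⟨?_, ?_, ?_⟩
      · rw [e1]
        nlinarith [mul_le_mul_of_nonneg_left hp.1 hα, mul_le_mul_of_nonneg_left hq.1 hβ]
      · rw [e2]
        nlinarith [mul_le_mul_of_nonneg_left hp.2.1 hα, mul_le_mul_of_nonneg_left hq.2.1 hβ]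
      · rw [e1, e2]
        nlinarith [mul_le_mul_of_nonneg_left hp.2.2 hα, mul_le_mul_of_nonneg_left hq.2.2 hβ]
    have hsub : convexHull ℝ {![(-1:ℝ), -1, -1], ![-1, 0, -1], ![-1, -1, 0]} ⊆
        {x : Fin 3 → ℝ | -1 ≤ x 1 ∧ -1 ≤ x 2 ∧ x 1 + x 2 ≤ -1} := by
      apply convexHull_min _ hRconv
      intro p hp
      rcases hp with rfl | rfl | rfl <;> refine ⟨by norm_num, by norm_num [Matrix.cons_val_two], by norm_num [Matrix.cons_val_two]⟩
    exact hsub hmem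
  -- transverse Fano edges at the three facet vertices
  have hTe1 : IsEdgeDir Δ ![(-1:ℝ),-1,-1] ![(1:ℝ),0,0] :=
    trans_edge_v1 hconv hmm1 hmm2 hmm3 hFsub hhalf (hfano _ hv1)
  have hTe2 : IsEdgeDir Δ ![(-1:ℝ),0,-1] ![(1:ℝ),2,0] :=
    trans_edge_v2 hconv hmm1 hmm2 hmm3 hFsub hhalf (hfano _ hv2)
  have hTe3 : IsEdgeDir Δ ![(-1:ℝ),-1,0] ![(1:ℝ),0,2] :=
    trans_edge_v3 hconv hmm1 hmm2 hmm3 hFsub hhalf (hfano _ hv3)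
  -- primitivity of the three transverse directions
  have hp100 : IsPrimitiveZ (![1,0,0] : Fin 3 → ℤ) := by
    constructor
    · intro h; have := congrFun h 0; simp at this
    · intro d hd
      have h0 := hd 0
      simp only [Matrix.cons_val_zero] at h0
      exact isUnit_of_dvd_one h0
  have hp120 : IsPrimitiveZ (![1,2,0] : Fin 3 → ℤ) := by
    constructor
    · intro h; have := congrFun h 0; simp at this
    · intro d hd
      have h0 := hd 0
      simp only [Matrix.cons_val_zero] at h0
      exact isUnit_of_dvd_one h0
  have hp102 : IsPrimitiveZ (![1,0,2] : Fin 3 → ℤ) := by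
    constructor
    · intro h; have := congrFun h 0; simp at this
    · intro d hd
      have h0 := hd 0
      simp only [Matrix.cons_val_zero] at h0
      exact isUnit_of_dvd_one h0
  -- lattice vertices
  have hlat1 : IsLatticePt ![(-1:ℝ),-1,-1] := by
    intro i; fin_cases i <;> exact ⟨-1, by norm_num⟩
  have hlat2 : IsLatticePt ![(-1:ℝ),0,-1] := by
    intro i; fin_cases i
    · exact ⟨-1, by norm_num⟩
    · exact ⟨0, by norm_num⟩
    · exact ⟨-1, by norm_num⟩
  have hlat3 : IsLatticePt ![(-1:ℝ),-1,0] := by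
    intro i; fin_cases i
    · exact ⟨-1, by norm_num⟩
    · exact ⟨-1, by norm_num⟩
    · exact ⟨0, by norm_num⟩
  -- rewrite the transverse directions as coerced integer vectors
  have hco100 : (![(1:ℝ),0,0]) = (fun i => ((![1,0,0] : Fin 3 → ℤ) i : ℝ)) := by
    funext i; fin_cases i <;> norm_num
  have hco120 : (![(1:ℝ),2,0]) = (fun i => ((![1,2,0] : Fin 3 → ℤ) i : ℝ)) := by
    funext i; fin_cases i <;> norm_num
  have hco102 : (![(1:ℝ),0,2]) = (fun i => ((![1,0,2] : Fin 3 → ℤ) i : ℝ)) := by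
    funext i; fin_cases i <;> norm_num
  -- the three lattice points on the transverse edges
  have hAmem : ![(0:ℝ),-1,-1] ∈ Δ := by
    have heq : ![(-1:ℝ),-1,-1] + (1:ℝ) • (fun i => ((![1,0,0] : Fin 3 → ℤ) i : ℝ))
        = ![(0:ℝ),-1,-1] := by
      funext i; fin_cases i <;> norm_num
    rw [← heq]
    exact edge_reach V hVlat Δ hΔ hlat1 hp100 (hco100 ▸ hTe1) zero_le_one le_rfl
  have hTmem : ![(0:ℝ),2,-1] ∈ Δ := by
    have heq : ![(-1:ℝ),0,-1] + (1:ℝ) • (fun i => ((![1,2,0] : Fin 3 → ℤ) i : ℝ))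
        = ![(0:ℝ),2,-1] := by
      funext i; fin_cases i <;> norm_num
    rw [← heq]
    exact edge_reach V hVlat Δ hΔ hlat2 hp120 (hco120 ▸ hTe2) zero_le_one le_rfl
  have hBmem : ![(0:ℝ),-1,2] ∈ Δ := by
    have heq : ![(-1:ℝ),-1,0] + (1:ℝ) • (fun i => ((![1,0,2] : Fin 3 → ℤ) i : ℝ))
        = ![(0:ℝ),-1,2] := by
      funext i; fin_cases i <;> norm_num
    rw [← heq]
    exact edge_reach V hVlat Δ hΔ hlat3 hp102 (hco102 ▸ hTe3) zero_le_one le_rfl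
  refine ⟨?_, ?_, hAmem, hTmem, hBmem⟩
  · intro e he hedge he0
    obtain ⟨a, hap, rfl⟩ := he
    have ha0 : a 0 ≠ 0 := by
      intro h
      exact he0 (by simp [h])
    have hres := uniq_v2 hconv hmm1 hmm2 hmm3 hhalf h0 huniq hTmem hAmem hBmem hTe2
      hap hedge (fun s hs0 hs1 => edge_reach V hVlat Δ hΔ hlat2 hap hedge hs0 hs1) ha0
    funext i
    rw [hres]
    fin_cases i <;> norm_num
  · intro e he hedge he0
    obtain ⟨a, hap, rfl⟩ := he
    have ha0 : a 0 ≠ 0 := by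
      intro h
      exact he0 (by simp [h])
    have hres := uniq_v3 hconv hmm1 hmm2 hmm3 hhalf h0 huniq hTmem hAmem hBmem hTe3
      hap hedge (fun s hs0 hs1 => edge_reach V hVlat Δ hΔ hlat3 hap hedge hs0 hs1) ha0
    funext i
    rw [hres]
    fin_cases i <;> norm_num
end
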